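/- arXiv:1305.0636 — 3 statements merged into one kernel-verified Lean document; each statement's English description precedes it below -/
import Mathlib

section
/- The class of quasi-threshold graphs has unbounded linear clique-width: for every k there exists a quasi-threshold graph G with lcw(G) > k. -/
/-! ## Common definitions

Linear clique-width (lcw) expressions and derived notions, following
Brignall–Lozin–Stacho, "Bichain graphs: geometric model and universal graphs" /
"Linear clique-width of subclasses of cographs".

An lcw expression over a label alphabet `L` is a list of operations:
insert a new vertex with a given label, add all edges between two distinct
label classes, or relabel one label class to another.  Vertices are indexed
by the natural numbers `0, 1, 2, …` in order of insertion. -/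

/-- The three kinds of operations of an lcw expression. -/
inductive LcwOp (L : Type) where
  | insert : L → LcwOp L
  | join : L → L → LcwOp L
  | relabel : L → L → LcwOp L

/-- The state while executing an lcw expression: the number `n` of vertices
inserted so far (the vertices are `0, …, n-1`), the adjacency relation built
so far, and the current labeling (`none` for indices not yet inserted). -/
structure LcwState (L : Type) where
  n : ℕ
  adj : ℕ → ℕ → Prop
  lab : ℕ → Option L

/-- The initial, empty state. -/
def LcwState.init (L : Type) : LcwState L :=
  ⟨0, fun _ _ => False, fun _ => none⟩

/-- Executing one operation. -/
def LcwState.step {L : Type} [DecidableEq L] (s : LcwState L) : LcwOp L → LcwState L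
  | .insert a => ⟨s.n + 1, s.adj, fun v => if v = s.n then some a else s.lab v⟩
  | .join i j =>
      ⟨s.n,
       fun u v => s.adj u v ∨
         (u ≠ v ∧ ((s.lab u = some i ∧ s.lab v = some j) ∨
                   (s.lab u = some j ∧ s.lab v = some i))),
       s.lab⟩
  | .relabel i j => ⟨s.n, s.adj, fun v => if s.lab v = some i then some j else s.lab v⟩

/-- Executing an lcw expression (a list of operations) from the empty state. -/
def runLcw {L : Type} [DecidableEq L] (e : List (LcwOp L)) : LcwState L :=
  e.foldl LcwState.step (LcwState.init L)

/-- Well-formedness: every edge-adding operation uses two distinct labels. -/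
def WfExpr {L : Type} (e : List (LcwOp L)) : Prop :=
  ∀ op ∈ e, ∀ i j : L, op = LcwOp.join i j → i ≠ j

/-- The expression `e` builds the graph `G`, where the bijection
`f` sends each vertex of `G` to its insertion index (so `f` records the
insertion order of the vertices). -/
def BuildsVia {L V : Type} [DecidableEq L] [Fintype V] (e : List (LcwOp L))
    (G : SimpleGraph V) (f : V → ℕ) : Prop :=
  WfExpr e ∧ Function.Injective f ∧ (runLcw e).n = Fintype.card V ∧
    (∀ v, f v < (runLcw e).n) ∧ ∀ u v, G.Adj u v ↔ (runLcw e).adj (f u) (f v)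

/-- The expression `e` builds the graph `G`. -/
def Builds {L V : Type} [DecidableEq L] [Fintype V] (e : List (LcwOp L))
    (G : SimpleGraph V) : Prop :=
  ∃ f : V → ℕ, BuildsVia e G f

/-- The linear clique-width of a finite graph: the least size of a label
alphabet over which some lcw expression builds `G`.  (An expression over
`Fin k` is an expression using `k` labels; an *efficient* expression for `G`
is one over `Fin (lcw G)`.) -/
noncomputable def lcw {V : Type} [Fintype V] (G : SimpleGraph V) : ℕ :=
  sInf {k : ℕ | ∃ e : List (LcwOp (Fin k)), Builds e G}

/-- `ℓ` is a sink label of the expression `e`: it is never used in an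
edge-adding operation and vertices labeled `ℓ` are never relabeled. -/
def SinkLabel {L : Type} (e : List (LcwOp L)) (ℓ : L) : Prop :=
  (∀ op ∈ e, ∀ i j : L, op = LcwOp.join i j → i ≠ ℓ ∧ j ≠ ℓ) ∧
  (∀ op ∈ e, ∀ j : L, op = LcwOp.relabel ℓ j → j = ℓ)

/-- An expression is sink-free if no label is a sink label. -/
def SinkFree {L : Type} (e : List (LcwOp L)) : Prop :=
  ∀ ℓ : L, ¬ SinkLabel e ℓ

/-- The disjoint union of two graphs. -/
def GraphDisjUnion {V W : Type} (G : SimpleGraph V) (H : SimpleGraph W) :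
    SimpleGraph (V ⊕ W) where
  Adj x y :=
    match x, y with
    | Sum.inl a, Sum.inl b => G.Adj a b
    | Sum.inr a, Sum.inr b => H.Adj a b
    | _, _ => False
  symm := by
    constructor
    rintro (a | a) (b | b) h
    · exact G.adj_symm h
    · exact h.elim
    · exact h.elim
    · exact H.adj_symm h
  loopless := by
    constructor
    rintro (a | a) h
    · exact G.irrefl h
    · exact H.irrefl h

/-- The join of two graphs: their disjoint union together with all edges
between the two sides. -/
def GraphJoin {V W : Type} (G : SimpleGraph V) (H : SimpleGraph W) :
    SimpleGraph (V ⊕ W) :=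
  (GraphDisjUnion Gᶜ Hᶜ)ᶜ

/-- `H` is (isomorphic to) an induced subgraph of `G`. -/
def InducedSubgraphOf {W V : Type} (H : SimpleGraph W) (G : SimpleGraph V) : Prop :=
  ∃ f : W ↪ V, ∀ a b : W, H.Adj a b ↔ G.Adj (f a) (f b)

/-- The path `P₄` on four vertices (edges 01, 12, 23). -/
def pathP4 : SimpleGraph (Fin 4) :=
  SimpleGraph.fromRel (fun a b => (b : ℕ) = (a : ℕ) + 1)

/-- The cycle `C₄` on four vertices (edges 01, 12, 23, 30). -/
def cycleC4 : SimpleGraph (Fin 4) :=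
  SimpleGraph.fromRel (fun a b => (b : ℕ) = (a : ℕ) + 1 ∨ ((a : ℕ) = 3 ∧ (b : ℕ) = 0))

/-- The graph `2K₂` (edges 01 and 23). -/
def twoK2 : SimpleGraph (Fin 4) :=
  SimpleGraph.fromRel (fun a b => ((a : ℕ) = 0 ∧ (b : ℕ) = 1) ∨ ((a : ℕ) = 2 ∧ (b : ℕ) = 3))

/-- Cographs: the graphs with no induced `P₄`. -/
def IsCograph {V : Type} (G : SimpleGraph V) : Prop :=
  ¬ InducedSubgraphOf pathP4 G

/-- Quasi-threshold (trivially perfect) graphs: no induced `P₄` and no induced `C₄`. -/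
def IsQuasiThreshold {V : Type} (G : SimpleGraph V) : Prop :=
  ¬ InducedSubgraphOf pathP4 G ∧ ¬ InducedSubgraphOf cycleC4 G

/-- Threshold graphs: no induced `P₄`, `C₄` or `2K₂`. -/
def IsThreshold {V : Type} (G : SimpleGraph V) : Prop :=
  ¬ InducedSubgraphOf pathP4 G ∧ ¬ InducedSubgraphOf cycleC4 G ∧ ¬ InducedSubgraphOf twoK2 G

/-- A finite graph, encoded with vertex set `Fin n`.  A *class* of graphs,
i.e. a set of finite graphs closed under isomorphism, is modelled as a
hereditary set of `FinGraph`s (hereditary sets are automatically closed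
under isomorphism). -/
def FinGraph : Type := Σ n : ℕ, SimpleGraph (Fin n)

/-- The complement of a finite graph. -/
def FinGraph.compl (G : FinGraph) : FinGraph := ⟨G.1, G.2ᶜ⟩

/-- The induced-subgraph order on finite graphs. -/
def IndF (H G : FinGraph) : Prop := InducedSubgraphOf H.2 G.2

/-- A set of finite graphs is hereditary if it is closed downward under the
induced subgraph order (in particular it is closed under isomorphism). -/
def Hereditary (C : Set FinGraph) : Prop :=
  ∀ G ∈ C, ∀ H : FinGraph, IndF H G → H ∈ C

/-- The finite graph `K` is isomorphic to the graph `G`. -/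
def IsoTo {V : Type} (K : FinGraph) (G : SimpleGraph V) : Prop :=
  ∃ e : Fin K.1 ≃ V, ∀ a b, K.2.Adj a b ↔ G.Adj (e a) (e b)

/-- The class `C` contains (a copy of) the graph `G`. -/
def MemUpToIso (C : Set FinGraph) {V : Type} (G : SimpleGraph V) : Prop :=
  ∃ K ∈ C, IsoTo K G

/-- `C` is closed under disjoint unions. -/
def ClosedUnderDisjointUnions (C : Set FinGraph) : Prop :=
  ∀ G ∈ C, ∀ H ∈ C, MemUpToIso C (GraphDisjUnion (Sigma.snd G) (Sigma.snd H))

/-- `C` is closed under joins. -/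
def ClosedUnderJoins (C : Set FinGraph) : Prop :=
  ∀ G ∈ C, ∀ H ∈ C, MemUpToIso C (GraphJoin (Sigma.snd G) (Sigma.snd H))

/-- `C` is atomic: it cannot be written as the union of two proper
hereditary subclasses. -/
def AtomicClass (C : Set FinGraph) : Prop :=
  ¬ ∃ D₁ D₂ : Set FinGraph, Hereditary D₁ ∧ Hereditary D₂ ∧
      D₁ ⊂ C ∧ D₂ ⊂ C ∧ C = D₁ ∪ D₂

/-- The inflation `G[H₁, …, Hₙ]` of a graph `G` on `Fin n` by graphs
`H i` (`i : Fin n`): substitute `H i` for the vertex `i` of `G`. -/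
def inflate {n : ℕ} (G : SimpleGraph (Fin n)) (m : Fin n → ℕ)
    (H : ∀ i : Fin n, SimpleGraph (Fin (m i))) :
    SimpleGraph (Σ i : Fin n, Fin (m i)) where
  Adj x y := (x.1 ≠ y.1 ∧ G.Adj x.1 y.1) ∨ ∃ h : x.1 = y.1, (H y.1).Adj (h ▸ x.2) y.2
  symm := by
    constructor
    rintro ⟨i, a⟩ ⟨j, b⟩ (⟨hne, hadj⟩ | ⟨h, hadj⟩)
    · exact Or.inl ⟨hne.symm, G.adj_symm hadj⟩
    · cases h
      exact Or.inr ⟨rfl, (H i).adj_symm hadj⟩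
  loopless := by
    constructor
    rintro ⟨i, a⟩ (⟨hne, _⟩ | ⟨h, hadj⟩)
    · exact hne rfl
    · exact (H i).irrefl hadj

/-- The inflation `C[D]` of the class `C` by the class `D`: all graphs
isomorphic to an inflation of a graph of `C` by graphs of `D`. -/
def classInflate (C D : Set FinGraph) : Set FinGraph :=
  {K | ∃ (n : ℕ) (G : SimpleGraph (Fin n)) (m : Fin n → ℕ)
        (H : ∀ i : Fin n, SimpleGraph (Fin (m i))),
      (⟨n, G⟩ : FinGraph) ∈ C ∧ (∀ i, (⟨m i, H i⟩ : FinGraph) ∈ D) ∧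
      IsoTo K (inflate G m H)}

/-- The class of threshold graphs (as finite graphs). -/
def thresholdClass : Set FinGraph := {G : FinGraph | IsThreshold G.2}

/-- Vertex types of the sequence witnessing unbounded linear clique-width:
`qtV 0` carries `G₁ = K₂` and `qtV (k+1)` carries
`G_{k+2} = K₁ ∗ ((G_{k+1} ∪ G_{k+1}) ∪ (G_{k+1} ∪ G_{k+1}))`. -/
def qtV : ℕ → Type
  | 0 => Fin 2
  | k + 1 => Unit ⊕ ((qtV k ⊕ qtV k) ⊕ (qtV k ⊕ qtV k))

instance qtVFintype : ∀ k : ℕ, Fintype (qtV k)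
  | 0 => inferInstanceAs (Fintype (Fin 2))
  | k + 1 =>
      letI := qtVFintype k
      inferInstanceAs (Fintype (Unit ⊕ ((qtV k ⊕ qtV k) ⊕ (qtV k ⊕ qtV k))))

/-- The graphs `G₁, G₂, …` of the paper, reindexed so that `qtG k = G_{k+1}`:
`qtG 0 = K₂` and `qtG (k+1) = K₁ ∗ ((qtG k ∪ qtG k) ∪ (qtG k ∪ qtG k))`. -/
def qtG : ∀ k : ℕ, SimpleGraph (qtV k)
  | 0 => (⊤ : SimpleGraph (Fin 2))
  | k + 1 =>
      GraphJoin (⊥ : SimpleGraph Unit)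
        (GraphDisjUnion (GraphDisjUnion (qtG k) (qtG k)) (GraphDisjUnion (qtG k) (qtG k)))

set_option linter.unusedSectionVars false

section Core
open LcwState

variable {L : Type} [DecidableEq L]

/-- Invariant of reachable states: labeled indices are exactly those below `n`,
and edges only exist between inserted vertices. -/
def LcwInv (s : LcwState L) : Prop :=
  (∀ x, s.lab x = none ↔ s.n ≤ x) ∧ (∀ x y, s.adj x y → x < s.n ∧ y < s.n)

lemma lcwInv_init : LcwInv (LcwState.init L) := by
  constructor
  · intro x; simp [LcwState.init]
  · intro x y h; exact h.elim

lemma lcwInv_step {s : LcwState L} (hs : LcwInv s) (op : LcwOp L) :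
    LcwInv (s.step op) := by
  obtain ⟨h1, h2⟩ := hs
  cases op with
  | insert a =>
      constructor
      · intro x
        simp only [LcwState.step]
        by_cases hx : x = s.n
        · subst hx; simp
        · simp only [if_neg hx]
          rw [h1 x]
          omega
      · intro x y h
        have := h2 x y h
        simp only [LcwState.step]
        omega
  | join i j =>
      constructor
      · intro x; exact h1 x
      · simp only [LcwState.step]
        rintro x y (h | ⟨hne, h⟩)
        · exact h2 x y h
        · have hx : s.lab x ≠ none := by
            rcases h with ⟨ha, _⟩ | ⟨ha, _⟩ <;> simp [ha]
          have hy : s.lab y ≠ none := by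
            rcases h with ⟨_, ha⟩ | ⟨_, ha⟩ <;> simp [ha]
          constructor
          · by_contra hc; exact hx ((h1 x).2 (by omega))
          · by_contra hc; exact hy ((h1 y).2 (by omega))
  | relabel i j =>
      constructor
      · intro x
        simp only [LcwState.step]
        by_cases hx : s.lab x = some i
        · have hlt : ¬ s.n ≤ x := fun hc => by simp [(h1 x).2 hc] at hx
          simp [hx, hlt]
        · simp only [if_neg hx]
          exact h1 x
      · exact h2

lemma lcwInv_foldl {s : LcwState L} (hs : LcwInv s) (e : List (LcwOp L)) :
    LcwInv (e.foldl LcwState.step s) := by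
  induction e generalizing s with
  | nil => exact hs
  | cons op e ih => exact ih (lcwInv_step hs op)

lemma lcwInv_runLcw (e : List (LcwOp L)) : LcwInv (runLcw e) :=
  lcwInv_foldl lcwInv_init e

/-- Core persistence lemma: two inserted vertices with the same label stay
indistinguishable with respect to adjacency towards any other fixed vertex. -/
lemma label_eq_persist (e : List (LcwOp L)) (s : LcwState L) (hs : LcwInv s)
    (u v w : ℕ) (hlab : s.lab u = s.lab v) (hsome : s.lab u ≠ none)
    (huw : u ≠ w) (hvw : v ≠ w) (hadj : s.adj u w ↔ s.adj v w) :
    ((e.foldl LcwState.step s).adj u w ↔ (e.foldl LcwState.step s).adj v w) := by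
  induction e generalizing s with
  | nil => exact hadj
  | cons op e ih =>
      refine ih (s := s.step op) (lcwInv_step hs op) ?_ ?_ ?_
      · -- labels stay equal
        cases op with
        | insert a =>
            have hu : u < s.n := by
              by_contra hc; exact hsome (hs.1 u |>.2 (by omega))
            have hv : v < s.n := by
              rw [hlab] at hsome
              by_contra hc; exact hsome (hs.1 v |>.2 (by omega))
            simp only [LcwState.step]
            rw [if_neg (by omega), if_neg (by omega)]
            exact hlab
        | join i j => exact hlab
        | relabel i j =>
            simp only [LcwState.step, hlab]
      · -- label still some
        cases op with
        | insert a =>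
            have hu : u < s.n := by
              by_contra hc; exact hsome (hs.1 u |>.2 (by omega))
            simp only [LcwState.step]
            rw [if_neg (by omega)]
            exact hsome
        | join i j => exact hsome
        | relabel i j =>
            simp only [LcwState.step]
            by_cases hc : s.lab u = some i <;> simp [hc, hsome]
      · -- adjacency towards w stays equivalent
        cases op with
        | insert a => exact hadj
        | join i j =>
            simp only [LcwState.step]
            constructor
            · rintro (h | ⟨_, h⟩)
              · exact Or.inl (hadj.1 h)
              · exact Or.inr ⟨hvw, by rw [← hlab]; exact h⟩
            · rintro (h | ⟨_, h⟩)
              · exact Or.inl (hadj.2 h)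
              · exact Or.inr ⟨huw, by rw [hlab]; exact h⟩
        | relabel i j => exact hadj

lemma n_le_step (s : LcwState L) (op : LcwOp L) :
    s.n ≤ (s.step op).n ∧ (s.step op).n ≤ s.n + 1 := by
  cases op <;> simp [LcwState.step]

/-- Any intermediate vertex count is attained at some prefix of the expression. -/
lemma exists_split (e : List (LcwOp L)) (s : LcwState L) (p : ℕ)
    (h0 : s.n ≤ p) (h1 : p ≤ (e.foldl LcwState.step s).n) :
    ∃ e₁ e₂, e = e₁ ++ e₂ ∧ (e₁.foldl LcwState.step s).n = p := by
  induction e generalizing s with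
  | nil =>
      refine ⟨[], [], rfl, ?_⟩
      simp at h1 ⊢
      omega
  | cons op e ih =>
      by_cases hp : s.n = p
      · exact ⟨[], op :: e, rfl, by simpa using hp⟩
      · have hle : (s.step op).n ≤ p := by
          have := n_le_step s op
          omega
        obtain ⟨e₁, e₂, he, hn⟩ := ih (s.step op) hle (by simpa using h1)
        exact ⟨op :: e₁, e₂, by simp [he], by simpa using hn⟩

end Core

section Hard

/-- `Hard G m`: for every insertion order there is a moment at which `m`
already-inserted vertices are pairwise distinguished by their adjacency to
future vertices, and moreover have a common future neighbor. -/
def Hard {V : Type} (G : SimpleGraph V) (m : ℕ) : Prop :=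
  ∀ f : V → ℕ, Function.Injective f →
    ∃ (p : ℕ) (S : Finset V), S.card = m ∧ (∀ a ∈ S, f a < p) ∧
      (∃ w, p ≤ f w ∧ ∀ a ∈ S, G.Adj a w) ∧
      (∀ a ∈ S, ∀ b ∈ S, a ≠ b → ∃ w, p ≤ f w ∧ ¬ (G.Adj a w ↔ G.Adj b w))

/-- The key lower bound: if `G` is `m`-hard then any lcw expression building
`G` uses at least `m` labels. -/
lemma Hard.le_labels {V : Type} [Fintype V] {G : SimpleGraph V} {m K : ℕ}
    (hH : Hard G m) (e : List (LcwOp (Fin K))) (hB : Builds e G) : m ≤ K := by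
  classical
  obtain ⟨f, _, hinj, hn, hlt, hadj⟩ := hB
  obtain ⟨p, S, hcard, hpre, -, hdis⟩ := hH f hinj
  by_contra hc
  push_neg at hc
  -- split the expression at vertex count `p' = min p (runLcw e).n`
  set p' := min p (runLcw e).n with hp'
  obtain ⟨e₁, e₂, hsplit, hn1⟩ := exists_split e (LcwState.init (Fin K)) p'
    (by simp [LcwState.init]) (by simp [runLcw] at *; omega)
  set s₁ := e₁.foldl LcwState.step (LcwState.init (Fin K)) with hs₁
  have hinv : LcwInv s₁ := lcwInv_foldl lcwInv_init e₁
  have hrun : runLcw e = e₂.foldl LcwState.step s₁ := by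
    rw [hsplit, runLcw, List.foldl_append]
  -- each element of S is already inserted at the checkpoint
  have hSin : ∀ a ∈ S, f a < s₁.n := by
    intro a ha
    have h1 := hpre a ha
    have h2 := hlt a
    rw [hn1]; omega
  -- pigeonhole on labels
  have hmaps : ∀ a ∈ S, s₁.lab (f a) ∈ (Finset.univ : Finset (Fin K)).image some := by
    intro a ha
    have : s₁.lab (f a) ≠ none := by
      intro hno
      have := (hinv.1 (f a)).1 hno
      have := hSin a ha
      omega
    obtain ⟨ℓ, hℓ⟩ := Option.ne_none_iff_exists'.1 this
    simp [hℓ]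
  have hlt' : ((Finset.univ : Finset (Fin K)).image some).card < S.card := by
    calc ((Finset.univ : Finset (Fin K)).image some).card
        ≤ (Finset.univ : Finset (Fin K)).card := Finset.card_image_le
      _ = K := by simp
      _ < m := hc
      _ = S.card := hcard.symm
  obtain ⟨a, ha, b, hb, hab, heq⟩ :=
    Finset.exists_ne_map_eq_of_card_lt_of_maps_to hlt' hmaps
  -- but a distinguishing future vertex exists: contradiction
  obtain ⟨w, hw, hnadj⟩ := hdis a ha b hb hab
  apply hnadj
  rw [hadj a w, hadj b w, hrun]
  have hsome : s₁.lab (f a) ≠ none := by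
    intro hno
    have := (hinv.1 (f a)).1 hno
    have := hSin a ha
    omega
  have hwn : s₁.n ≤ f w := by rw [hn1]; omega
  refine label_eq_persist e₂ s₁ hinv (f a) (f b) (f w) heq hsome ?_ ?_ ?_
  · intro hfe; have := hSin a ha; omega
  · intro hfe; have := hSin b hb; omega
  · constructor
    · intro h; exact absurd (hinv.2 _ _ h).2 (by omega)
    · intro h; exact absurd (hinv.2 _ _ h).2 (by omega)

end Hard

section Upper

variable {L : Type} [DecidableEq L]

/-- Effect of a list of join operations: labels and count unchanged, and the
new adjacency is the old one plus pairs of distinctly-joined label classes. -/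
lemma joins_effect (J : List (LcwOp L)) (hJ : ∀ op ∈ J, ∃ a b, op = LcwOp.join a b)
    (s : LcwState L) :
    (J.foldl LcwState.step s).n = s.n ∧ (J.foldl LcwState.step s).lab = s.lab ∧
    ∀ u v, ((J.foldl LcwState.step s).adj u v ↔ s.adj u v ∨
      ∃ a b, LcwOp.join a b ∈ J ∧ u ≠ v ∧
        ((s.lab u = some a ∧ s.lab v = some b) ∨
         (s.lab u = some b ∧ s.lab v = some a))) := by
  induction J generalizing s with
  | nil => simp
  | cons op J ih =>
      obtain ⟨a₀, b₀, rfl⟩ := hJ op List.mem_cons_self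
      obtain ⟨ihn, ihlab, ihadj⟩ := ih (fun op h => hJ op (List.mem_cons_of_mem _ h))
        (s.step (LcwOp.join a₀ b₀))
      refine ⟨ihn, ihlab, fun u v => ?_⟩
      rw [List.foldl_cons, ihadj u v]
      simp only [LcwState.step]
      constructor
      · rintro ((h | ⟨hne, h⟩) | ⟨a, b, hmem, hne, h⟩)
        · exact Or.inl h
        · exact Or.inr ⟨a₀, b₀, List.mem_cons_self, hne, h⟩
        · exact Or.inr ⟨a, b, List.mem_cons_of_mem _ hmem, hne, h⟩
      · rintro (h | ⟨a, b, hmem, hne, h⟩)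
        · exact Or.inl (Or.inl h)
        · rcases List.mem_cons.1 hmem with heq | hmem'
          · cases heq
            exact Or.inl (Or.inr ⟨hne, h⟩)
          · exact Or.inr ⟨a, b, hmem', hne, h⟩

end Upper

section Build

variable {V : Type} [Fintype V]

/-- Every finite nonempty graph is built by some expression over `card V` labels. -/
lemma builds_card (G : SimpleGraph V) [Nonempty V] :
    ∃ e : List (LcwOp (Fin (Fintype.card V))), Builds e G := by
  classical
  set n := Fintype.card V with hn
  have hpos : 0 < n := Fintype.card_pos
  set f : V → ℕ := fun v => ((Fintype.equivFin V) v : ℕ) with hf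
  have hinj : Function.Injective f := by
    intro u v h
    exact (Fintype.equivFin V).injective (Fin.val_injective h)
  have hflt : ∀ v, f v < n := fun v => ((Fintype.equivFin V) v).2
  set li : ℕ → Fin n := fun i => ⟨i % n, Nat.mod_lt _ hpos⟩ with hli
  have hli_eq : ∀ i j, i < n → j < n → (li i = li j ↔ i = j) := by
    intro i j hi hj
    constructor
    · intro h
      have := congrArg Fin.val h
      simpa [hli, Nat.mod_eq_of_lt hi, Nat.mod_eq_of_lt hj] using this
    · intro h; rw [h]
  -- insertion phase
  set ins : List (LcwOp (Fin n)) := (List.range n).map (fun i => LcwOp.insert (li i))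
    with hins
  have hinsState : ∀ m : ℕ,
      (((List.range m).map (fun i => LcwOp.insert (li i))).foldl LcwState.step
        (LcwState.init (Fin n))) =
      ⟨m, fun _ _ => False, fun v => if v < m then some (li v) else none⟩ := by
    intro m
    induction m with
    | zero => simp [LcwState.init, runLcw]
    | succ m ih =>
        rw [List.range_succ, List.map_append, List.foldl_append, ih]
        simp only [List.map_cons, List.map_nil, List.foldl_cons, List.foldl_nil,
          LcwState.step]
        congr 1
        funext v
        by_cases h1 : v = m
        · simp [h1]
        · by_cases h2 : v < m
          · have : v < m + 1 := by omega
            simp [h1, h2, this]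
          · have : ¬ v < m + 1 := by omega
            simp [h1, h2, this]
  -- join phase
  set J : List (LcwOp (Fin n)) :=
    ((List.range n).product (List.range n)).filterMap
      (fun q => if (∃ u v : V, f u = q.1 ∧ f v = q.2 ∧ G.Adj u v)
        then some (LcwOp.join (li q.1) (li q.2)) else none) with hJ
  have hJjoin : ∀ op ∈ J, ∃ a b, op = LcwOp.join a b := by
    intro op hop
    rw [hJ, List.mem_filterMap] at hop
    obtain ⟨q, -, hq⟩ := hop
    by_cases hc : (∃ u v : V, f u = q.1 ∧ f v = q.2 ∧ G.Adj u v)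
    · rw [if_pos hc] at hq
      exact ⟨_, _, (Option.some_injective _ hq).symm⟩
    · rw [if_neg hc] at hq; cases hq
  have hJmem : ∀ a b : Fin n, LcwOp.join a b ∈ J ↔
      ∃ i j : ℕ, i < n ∧ j < n ∧ a = li i ∧ b = li j ∧
        (∃ u v : V, f u = i ∧ f v = j ∧ G.Adj u v) := by
    intro a b
    rw [hJ, List.mem_filterMap]
    constructor
    · rintro ⟨q, hqmem, hq⟩
      by_cases hc : (∃ u v : V, f u = q.1 ∧ f v = q.2 ∧ G.Adj u v)
      · rw [if_pos hc] at hq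
        have h1 := (Option.some_injective _ hq)
        have hmem := List.pair_mem_product.1 (by exact hqmem)
        cases h1
        exact ⟨q.1, q.2, List.mem_range.1 hmem.1, List.mem_range.1 hmem.2, rfl, rfl, hc⟩
      · rw [if_neg hc] at hq; cases hq
    · rintro ⟨i, j, hi, hj, rfl, rfl, hc⟩
      refine ⟨(i, j), ?_, ?_⟩
      · exact List.pair_mem_product.2 ⟨List.mem_range.2 hi, List.mem_range.2 hj⟩
      · rw [if_pos hc]
  refine ⟨ins ++ J, f, ?_, hinj, ?_, ?_, ?_⟩
  · -- well-formed
    intro op hop i j heq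
    rcases List.mem_append.1 hop with h | h
    · rw [hins, List.mem_map] at h
      obtain ⟨x, -, hx⟩ := h
      rw [heq] at hx; cases hx
    · subst heq
      obtain ⟨i', j', hi', hj', hii, hjj, u, v, hu, hv, huv⟩ := (hJmem i j).1 h
      intro hij
      have : i' = j' := by
        rw [← hli_eq i' j' hi' hj', ← hii, ← hjj, hij]
      have : u = v := hinj (by omega)
      exact G.loopless.irrefl u (this ▸ huv)
  all_goals
    have hrun : runLcw (ins ++ J) = J.foldl LcwState.step
        ⟨n, fun _ _ => False, fun v => if v < n then some (li v) else none⟩ := by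
      rw [runLcw, List.foldl_append, hins, hinsState n]
  · -- count
    rw [hrun, (joins_effect J hJjoin _).1]
  · -- all vertices inserted
    intro v
    rw [hrun, (joins_effect J hJjoin _).1]
    exact hflt v
  · -- adjacency
    intro u v
    rw [hrun]
    rw [(joins_effect J hJjoin _).2.2 (f u) (f v)]
    simp only [hflt u, hflt v, if_pos]
    constructor
    · intro h
      refine Or.inr ⟨li (f u), li (f v), ?_, fun hc => G.loopless.irrefl u (hinj hc ▸ h), ?_⟩
      · exact (hJmem _ _).2 ⟨f u, f v, hflt u, hflt v, rfl, rfl, u, v, rfl, rfl, h⟩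
      · left
        constructor <;> simp [hflt u, hflt v]
    · rintro (h | ⟨a, b, hmem, hne, hl⟩)
      · exact h.elim
      · obtain ⟨i, j, hi, hj, rfl, rfl, u', v', hu', hv', hadj'⟩ := (hJmem a b).1 hmem
        have hlu : ∀ x y, x < n → y < n →
            some (li x) = some (li y) → x = y := by
          intro x y hx hy hxy
          exact (hli_eq x y hx hy).1 (Option.some_injective _ hxy)
        rcases hl with ⟨h1, h2⟩ | ⟨h1, h2⟩
        · have e1 : f u = i := hlu _ _ (hflt u) hi h1
          have e2 : f v = j := hlu _ _ (hflt v) hj h2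
          have : u = u' := hinj (by omega)
          have : v = v' := hinj (by omega)
          subst_vars
          exact hadj'
        · have e1 : f u = j := hlu _ _ (hflt u) hj h1
          have e2 : f v = i := hlu _ _ (hflt v) hi h2
          have : u = v' := hinj (by omega)
          have : v = u' := hinj (by omega)
          subst_vars
          exact hadj'.symm

end Build

section Copies

@[simp] lemma disjUnion_adj_ll {V W : Type} (G : SimpleGraph V) (H : SimpleGraph W)
    (a b : V) : (GraphDisjUnion G H).Adj (Sum.inl a) (Sum.inl b) ↔ G.Adj a b := Iff.rfl

@[simp] lemma disjUnion_adj_rr {V W : Type} (G : SimpleGraph V) (H : SimpleGraph W)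
    (a b : W) : (GraphDisjUnion G H).Adj (Sum.inr a) (Sum.inr b) ↔ H.Adj a b := Iff.rfl

@[simp] lemma disjUnion_adj_lr {V W : Type} (G : SimpleGraph V) (H : SimpleGraph W)
    (a : V) (b : W) : (GraphDisjUnion G H).Adj (Sum.inl a) (Sum.inr b) ↔ False := Iff.rfl

@[simp] lemma disjUnion_adj_rl {V W : Type} (G : SimpleGraph V) (H : SimpleGraph W)
    (a : W) (b : V) : (GraphDisjUnion G H).Adj (Sum.inr a) (Sum.inl b) ↔ False := Iff.rfl

lemma join_adj_lr {V W : Type} (G : SimpleGraph V) (H : SimpleGraph W) (a : V) (b : W) :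
    (GraphJoin G H).Adj (Sum.inl a) (Sum.inr b) := by
  show (GraphDisjUnion Gᶜ Hᶜ)ᶜ.Adj _ _
  rw [SimpleGraph.compl_adj]
  exact ⟨fun h => Sum.inl_ne_inr h, by simp⟩

lemma join_adj_rl {V W : Type} (G : SimpleGraph V) (H : SimpleGraph W) (a : W) (b : V) :
    (GraphJoin G H).Adj (Sum.inr a) (Sum.inl b) := by
  show (GraphDisjUnion Gᶜ Hᶜ)ᶜ.Adj _ _
  rw [SimpleGraph.compl_adj]
  exact ⟨fun h => Sum.inr_ne_inl h, by simp⟩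

lemma join_adj_rr {V W : Type} (G : SimpleGraph V) (H : SimpleGraph W) (a b : W) :
    (GraphJoin G H).Adj (Sum.inr a) (Sum.inr b) ↔ H.Adj a b := by
  show (GraphDisjUnion Gᶜ Hᶜ)ᶜ.Adj _ _ ↔ _
  rw [SimpleGraph.compl_adj]
  constructor
  · rintro ⟨hne, h⟩
    by_contra hadj
    exact h (by
      rw [disjUnion_adj_rr, SimpleGraph.compl_adj]
      exact ⟨fun e => hne (by rw [e]), hadj⟩)
  · intro h
    refine ⟨fun e => H.ne_of_adj h (Sum.inr.inj e), ?_⟩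
    rw [disjUnion_adj_rr, SimpleGraph.compl_adj]
    rintro ⟨-, hc⟩
    exact hc h

lemma join_adj_ll {V W : Type} (G : SimpleGraph V) (H : SimpleGraph W) (a b : V) :
    (GraphJoin G H).Adj (Sum.inl a) (Sum.inl b) ↔ G.Adj a b := by
  show (GraphDisjUnion Gᶜ Hᶜ)ᶜ.Adj _ _ ↔ _
  rw [SimpleGraph.compl_adj]
  constructor
  · rintro ⟨hne, h⟩
    by_contra hadj
    exact h (by
      rw [disjUnion_adj_ll, SimpleGraph.compl_adj]
      exact ⟨fun e => hne (by rw [e]), hadj⟩)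
  · intro h
    refine ⟨fun e => G.ne_of_adj h (Sum.inl.inj e), ?_⟩
    rw [disjUnion_adj_ll, SimpleGraph.compl_adj]
    rintro ⟨-, hc⟩
    exact hc h

/-- The root vertex of `qtG (k+1)`. -/
def qtRoot (k : ℕ) : qtV (k + 1) := Sum.inl ()

/-- The four copy embeddings into `qtV (k+1)`. -/
def qtE (k : ℕ) (i : Fin 4) (w : qtV k) : qtV (k + 1) :=
  if i.val = 0 then Sum.inr (Sum.inl (Sum.inl w))
  else if i.val = 1 then Sum.inr (Sum.inl (Sum.inr w))
  else if i.val = 2 then Sum.inr (Sum.inr (Sum.inl w))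
  else Sum.inr (Sum.inr (Sum.inr w))

set_option linter.unreachableTactic false in
set_option linter.unusedTactic false in
lemma qtE_inj (k : ℕ) (i : Fin 4) : Function.Injective (qtE k i) := by
  intro a b h
  fin_cases i <;> simp only [qtE] at h <;> norm_num at h <;>
    (repeat injection h with h) <;> exact h

lemma qtE_ne_root (k : ℕ) (i : Fin 4) (a : qtV k) : qtE k i a ≠ qtRoot k := by
  intro h
  rw [qtRoot] at h
  fin_cases i <;> simp only [qtE] at h <;> norm_num at h <;> injection h

lemma qtE_ne {k : ℕ} {i j : Fin 4} (hij : i ≠ j) (a b : qtV k) :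
    qtE k i a ≠ qtE k j b := by
  intro h
  fin_cases i <;> fin_cases j <;>
    first
      | exact hij rfl
      | (simp only [qtE] at h; norm_num at h; (repeat injection h with h); injection h)

lemma qtG_succ (k : ℕ) : qtG (k + 1) =
    GraphJoin (⊥ : SimpleGraph Unit)
      (GraphDisjUnion (GraphDisjUnion (qtG k) (qtG k)) (GraphDisjUnion (qtG k) (qtG k))) :=
  rfl

lemma qtG_adj_EE (k : ℕ) (i : Fin 4) (a b : qtV k) :
    (qtG (k + 1)).Adj (qtE k i a) (qtE k i b) ↔ (qtG k).Adj a b := by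
  rw [qtG_succ]
  fin_cases i <;> simp [qtE, join_adj_rr]

lemma qtG_adj_EE' (k : ℕ) {i j : Fin 4} (hij : i ≠ j) (a b : qtV k) :
    ¬ (qtG (k + 1)).Adj (qtE k i a) (qtE k j b) := by
  rw [qtG_succ]
  fin_cases i <;> fin_cases j <;> simp_all [qtE, join_adj_rr]

lemma qtG_adj_rE (k : ℕ) (i : Fin 4) (a : qtV k) :
    (qtG (k + 1)).Adj (qtRoot k) (qtE k i a) := by
  rw [qtG_succ]
  fin_cases i <;> exact join_adj_lr _ _ _ _

lemma qtG_adj_Er (k : ℕ) (i : Fin 4) (a : qtV k) :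
    (qtG (k + 1)).Adj (qtE k i a) (qtRoot k) := by
  rw [qtG_succ]
  fin_cases i <;> exact join_adj_rl _ _ _ _

end Copies

section HardQt

lemma hard_base_aux : Hard (⊤ : SimpleGraph (Fin 2)) 1 := by
  intro f hf
  have h01 : (0 : Fin 2) ≠ 1 := by decide
  have hne : f 0 ≠ f 1 := fun h => h01 (hf h)
  have hadj : (⊤ : SimpleGraph (Fin 2)).Adj 0 1 := by simp [h01]
  rcases Nat.lt_or_ge (f 0) (f 1) with h | h
  · refine ⟨f 0 + 1, {0}, by simp, by simp, ⟨1, by omega, ?_⟩, ?_⟩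
    · intro a ha
      rw [Finset.mem_singleton] at ha
      subst ha
      exact hadj
    · intro a ha b hb hab
      rw [Finset.mem_singleton] at ha hb
      exact absurd (ha.trans hb.symm) hab
  · have h' : f 1 < f 0 := by omega
    refine ⟨f 1 + 1, {1}, by simp, by simp, ⟨0, by omega, ?_⟩, ?_⟩
    · intro a ha
      rw [Finset.mem_singleton] at ha
      subst ha
      exact hadj.symm
    · intro a ha b hb hab
      rw [Finset.mem_singleton] at ha hb
      exact absurd (ha.trans hb.symm) hab

lemma hard_base : Hard (qtG 0) 1 := hard_base_aux

lemma hard_step {k m : ℕ} (hm : 0 < m) (hH : Hard (qtG k) m) :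
    Hard (qtG (k + 1)) (m + 1) := by
  classical
  intro f hf
  have H4 : ∀ i : Fin 4, ∃ (p : ℕ) (S : Finset (qtV k)), S.card = m ∧
      (∀ a ∈ S, f (qtE k i a) < p) ∧
      (∃ w, p ≤ f (qtE k i w) ∧ ∀ a ∈ S, (qtG k).Adj a w) ∧
      (∀ a ∈ S, ∀ b ∈ S, a ≠ b →
        ∃ w, p ≤ f (qtE k i w) ∧ ¬ ((qtG k).Adj a w ↔ (qtG k).Adj b w)) :=
    fun i => hH (fun w => f (qtE k i w)) (fun a b h => qtE_inj k i (hf h))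
  choose p S hcard hpre hcom hdis using H4
  choose wst hwst hwadj using hcom
  set r : qtV (k + 1) := qtRoot k with hr
  by_cases hsucc : ∃ i : Fin 4,
      (f r < p i ∧ ∃ (j : Fin 4) (b : qtV k), j ≠ i ∧ p i ≤ f (qtE k j b)) ∨
      (p i ≤ f r ∧ ∃ (j : Fin 4) (b : qtV k), j ≠ i ∧ f (qtE k j b) < p i)
  · obtain ⟨i, hcase⟩ := hsucc
    have himg_card : ((S i).image (qtE k i)).card = m := by
      rw [Finset.card_image_of_injective _ (qtE_inj k i), hcard]
    have himg_pre : ∀ a ∈ (S i).image (qtE k i), f a < p i := by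
      intro a ha
      obtain ⟨s, hs, rfl⟩ := Finset.mem_image.1 ha
      exact hpre i s hs
    rcases hcase with ⟨hrlt, j, b0, hji, hjb⟩ | ⟨hrge, j, b0, hji, hjb⟩
    · -- the extra vertex is the root
      refine ⟨p i, insert r ((S i).image (qtE k i)), ?_, ?_, ?_, ?_⟩
      · rw [Finset.card_insert_of_notMem, himg_card]
        intro hmem
        obtain ⟨a, -, ha⟩ := Finset.mem_image.1 hmem
        exact qtE_ne_root k i a ha
      · intro a ha
        rcases Finset.mem_insert.1 ha with rfl | ha
        · exact hrlt
        · exact himg_pre a ha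
      · refine ⟨qtE k i (wst i), hwst i, ?_⟩
        intro a ha
        rcases Finset.mem_insert.1 ha with rfl | ha
        · exact qtG_adj_rE k i (wst i)
        · obtain ⟨s, hs, rfl⟩ := Finset.mem_image.1 ha
          exact (qtG_adj_EE k i s (wst i)).2 (hwadj i s hs)
      · intro a ha b hb hab
        rcases Finset.mem_insert.1 ha with rfl | ha' <;>
          rcases Finset.mem_insert.1 hb with rfl | hb'
        · exact absurd rfl hab
        · obtain ⟨s, hs, rfl⟩ := Finset.mem_image.1 hb'
          exact ⟨qtE k j b0, hjb, fun hiff =>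
            qtG_adj_EE' k (Ne.symm hji) s b0 (hiff.1 (qtG_adj_rE k j b0))⟩
        · obtain ⟨s, hs, rfl⟩ := Finset.mem_image.1 ha'
          exact ⟨qtE k j b0, hjb, fun hiff =>
            qtG_adj_EE' k (Ne.symm hji) s b0 (hiff.2 (qtG_adj_rE k j b0))⟩
        · obtain ⟨s, hs, rfl⟩ := Finset.mem_image.1 ha'
          obtain ⟨t, ht, rfl⟩ := Finset.mem_image.1 hb'
          have hst : s ≠ t := fun h => hab (by rw [h])
          obtain ⟨w0, hw0, hnd⟩ := hdis i s hs t ht hst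
          exact ⟨qtE k i w0, hw0, fun hiff =>
            hnd (((qtG_adj_EE k i s w0).symm.trans hiff).trans (qtG_adj_EE k i t w0))⟩
    · -- the extra vertex comes from another copy
      refine ⟨p i, insert (qtE k j b0) ((S i).image (qtE k i)), ?_, ?_, ?_, ?_⟩
      · rw [Finset.card_insert_of_notMem, himg_card]
        intro hmem
        obtain ⟨a, -, ha⟩ := Finset.mem_image.1 hmem
        exact qtE_ne (Ne.symm hji) a b0 ha
      · intro a ha
        rcases Finset.mem_insert.1 ha with rfl | ha
        · exact hjb
        · exact himg_pre a ha
      · refine ⟨r, hrge, ?_⟩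
        intro a ha
        rcases Finset.mem_insert.1 ha with rfl | ha
        · exact qtG_adj_Er k j b0
        · obtain ⟨s, hs, rfl⟩ := Finset.mem_image.1 ha
          exact qtG_adj_Er k i s
      · intro a ha b hb hab
        rcases Finset.mem_insert.1 ha with rfl | ha' <;>
          rcases Finset.mem_insert.1 hb with rfl | hb'
        · exact absurd rfl hab
        · obtain ⟨s, hs, rfl⟩ := Finset.mem_image.1 hb'
          exact ⟨qtE k i (wst i), hwst i, fun hiff =>
            qtG_adj_EE' k hji b0 (wst i)
              (hiff.2 ((qtG_adj_EE k i s (wst i)).2 (hwadj i s hs)))⟩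
        · obtain ⟨s, hs, rfl⟩ := Finset.mem_image.1 ha'
          exact ⟨qtE k i (wst i), hwst i, fun hiff =>
            qtG_adj_EE' k hji b0 (wst i)
              (hiff.1 ((qtG_adj_EE k i s (wst i)).2 (hwadj i s hs)))⟩
        · obtain ⟨s, hs, rfl⟩ := Finset.mem_image.1 ha'
          obtain ⟨t, ht, rfl⟩ := Finset.mem_image.1 hb'
          have hst : s ≠ t := fun h => hab (by rw [h])
          obtain ⟨w0, hw0, hnd⟩ := hdis i s hs t ht hst
          exact ⟨qtE k i w0, hw0, fun hiff =>
            hnd (((qtG_adj_EE k i s w0).symm.trans hiff).trans (qtG_adj_EE k i t w0))⟩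
  · -- derive a contradiction from failure at all four copies
    exfalso
    have hfail : ∀ i : Fin 4,
        (f r < p i → ∀ (j : Fin 4) (b : qtV k), j ≠ i → f (qtE k j b) < p i) ∧
        (p i ≤ f r → ∀ (j : Fin 4) (b : qtV k), j ≠ i → p i ≤ f (qtE k j b)) := by
      intro i
      constructor
      · intro h1 j b hji
        by_contra hc
        exact hsucc ⟨i, Or.inl ⟨h1, j, b, hji, by omega⟩⟩
      · intro h1 j b hji
        by_contra hc
        exact hsucc ⟨i, Or.inr ⟨h1, j, b, hji, by omega⟩⟩
    have pairA : ∀ i j : Fin 4, i ≠ j → f r < p i → f r < p j → False := by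
      intro i j hij h1 h2
      have a1 := (hfail i).1 h1 j (wst j) (Ne.symm hij)
      have a2 := (hfail j).1 h2 i (wst i) hij
      have b1 := hwst i
      have b2 := hwst j
      omega
    have pairB : ∀ i j : Fin 4, i ≠ j → p i ≤ f r → p j ≤ f r → False := by
      intro i j hij h1 h2
      obtain ⟨a, ha⟩ := Finset.card_pos.1 (by rw [hcard i]; exact hm)
      obtain ⟨a', ha'⟩ := Finset.card_pos.1 (by rw [hcard j]; exact hm)
      have c1 := (hfail i).2 h1 j a' (Ne.symm hij)
      have c2 := (hfail j).2 h2 i a hij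
      have d1 := hpre i a ha
      have d2 := hpre j a' ha'
      omega
    by_cases h0 : f r < p 0 <;> by_cases h1 : f r < p 1 <;> by_cases h2 : f r < p 2
    · exact pairA 0 1 (by decide) h0 h1
    · exact pairA 0 1 (by decide) h0 h1
    · exact pairA 0 2 (by decide) h0 h2
    · exact pairB 1 2 (by decide) (by omega) (by omega)
    · exact pairA 1 2 (by decide) h1 h2
    · exact pairB 0 2 (by decide) (by omega) (by omega)
    · exact pairB 0 1 (by decide) (by omega) (by omega)
    · exact pairB 0 1 (by decide) (by omega) (by omega)

lemma hard_qtG : ∀ k : ℕ, Hard (qtG k) (k + 1)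
  | 0 => hard_base
  | k + 1 => hard_step (Nat.succ_pos k) (hard_qtG k)

end HardQt

section QT

instance : DecidableRel pathP4.Adj := fun a b =>
  decidable_of_iff' _ (SimpleGraph.fromRel_adj _ a b)

instance : DecidableRel cycleC4.Adj := fun a b =>
  decidable_of_iff' _ (SimpleGraph.fromRel_adj _ a b)

/-- A graph with a spanning path has no induced copy split across a disjoint union. -/
lemma no_induced_union {V W : Type} (F : SimpleGraph (Fin 4))
    (h01 : F.Adj 0 1) (h12 : F.Adj 1 2) (h23 : F.Adj 2 3)
    {G : SimpleGraph V} {H : SimpleGraph W}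
    (hG : ¬ InducedSubgraphOf F G) (hH : ¬ InducedSubgraphOf F H) :
    ¬ InducedSubgraphOf F (GraphDisjUnion G H) := by
  rintro ⟨f, hf⟩
  have key : ∀ a b : Fin 4, F.Adj a b →
      ((∃ x y, f a = Sum.inl x ∧ f b = Sum.inl y) ∨
       (∃ x y, f a = Sum.inr x ∧ f b = Sum.inr y)) := by
    intro a b h
    have hadj := (hf a b).1 h
    cases fa : f a with
    | inl x =>
        cases fb : f b with
        | inl y => exact Or.inl ⟨x, y, rfl, rfl⟩
        | inr y => rw [fa, fb] at hadj; exact hadj.elim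
    | inr x =>
        cases fb : f b with
        | inl y => rw [fa, fb] at hadj; exact hadj.elim
        | inr y => exact Or.inr ⟨x, y, rfl, rfl⟩
  rcases key 0 1 h01 with ⟨x0, x1, e0, e1⟩ | ⟨x0, x1, e0, e1⟩ <;>
    rcases key 1 2 h12 with ⟨y1, y2, e1', e2⟩ | ⟨y1, y2, e1', e2⟩ <;>
    rcases key 2 3 h23 with ⟨z2, z3, e2', e3⟩ | ⟨z2, z3, e2', e3⟩ <;>
    [skip; exact Sum.inl_ne_inr (e2.symm.trans e2');
     exact Sum.inl_ne_inr (e1.symm.trans e1');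
     exact Sum.inl_ne_inr (e1.symm.trans e1');
     exact Sum.inr_ne_inl (e1.symm.trans e1');
     exact Sum.inr_ne_inl (e1.symm.trans e1');
     exact Sum.inr_ne_inl (e2.symm.trans e2'); skip]
  · -- all on the left
    apply hG
    have hg : ∀ a : Fin 4, ∃ x, f a = Sum.inl x := by
      intro a
      fin_cases a
      exacts [⟨x0, e0⟩, ⟨x1, e1⟩, ⟨y2, e2⟩, ⟨z3, e3⟩]
    choose g hgl using hg
    refine ⟨⟨g, fun a b hab => f.injective (by rw [hgl a, hgl b, hab])⟩, fun a b => ?_⟩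
    rw [hf a b, hgl a, hgl b, disjUnion_adj_ll]
    exact Iff.rfl
  · -- all on the right
    apply hH
    have hg : ∀ a : Fin 4, ∃ x, f a = Sum.inr x := by
      intro a
      fin_cases a
      exacts [⟨x0, e0⟩, ⟨x1, e1⟩, ⟨y2, e2⟩, ⟨z3, e3⟩]
    choose g hgl using hg
    refine ⟨⟨g, fun a b hab => f.injective (by rw [hgl a, hgl b, hab])⟩, fun a b => ?_⟩
    rw [hf a b, hgl a, hgl b, disjUnion_adj_rr]
    exact Iff.rfl

/-- Joining a single universal vertex creates no new induced copy of a graph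
in which every vertex has a non-neighbor. -/
lemma no_induced_join_unit {X : Type} (F : SimpleGraph (Fin 4))
    (hnon : ∀ a : Fin 4, ∃ b, b ≠ a ∧ ¬ F.Adj a b)
    {H : SimpleGraph X} (hH : ¬ InducedSubgraphOf F H) :
    ¬ InducedSubgraphOf F (GraphJoin (⊥ : SimpleGraph Unit) H) := by
  rintro ⟨f, hf⟩
  by_cases hroot : ∃ a, f a = Sum.inl ()
  · obtain ⟨a, ha⟩ := hroot
    obtain ⟨b, hba, hnadj⟩ := hnon a
    have hfb : ∃ x, f b = Sum.inr x := by
      cases h : f b with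
      | inl u =>
          cases u
          exact absurd (f.injective (h.trans ha.symm)) hba
      | inr x => exact ⟨x, rfl⟩
    obtain ⟨x, hx⟩ := hfb
    exact hnadj ((hf a b).2 (by rw [ha, hx]; exact join_adj_lr _ _ _ _))
  · push_neg at hroot
    have hxall : ∀ a, ∃ x, f a = Sum.inr x := by
      intro a
      cases h : f a with
      | inl u => cases u; exact absurd h (hroot a)
      | inr x => exact ⟨x, rfl⟩
    choose g hgl using hxall
    apply hH
    refine ⟨⟨g, fun a b hab => f.injective (by rw [hgl a, hgl b, hab])⟩, fun a b => ?_⟩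
    rw [hf a b, hgl a, hgl b, join_adj_rr]
    exact Iff.rfl

lemma qtG_quasiThreshold : ∀ k : ℕ, IsQuasiThreshold (qtG k) := by
  intro k
  induction k with
  | zero =>
      constructor <;>
        · rintro ⟨f, -⟩
          have f' : Fin 4 ↪ Fin 2 := ⟨fun a => f a, f.injective⟩
          have := Fintype.card_le_of_embedding f'
          simp at this
  | succ k ih =>
      obtain ⟨ihP, ihC⟩ := ih
      have hUP : ¬ InducedSubgraphOf pathP4
          (GraphDisjUnion (GraphDisjUnion (qtG k) (qtG k))
            (GraphDisjUnion (qtG k) (qtG k))) := by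
        apply no_induced_union pathP4 (by decide) (by decide) (by decide) <;>
          exact no_induced_union pathP4 (by decide) (by decide) (by decide) ihP ihP
      have hUC : ¬ InducedSubgraphOf cycleC4
          (GraphDisjUnion (GraphDisjUnion (qtG k) (qtG k))
            (GraphDisjUnion (qtG k) (qtG k))) := by
        apply no_induced_union cycleC4 (by decide) (by decide) (by decide) <;>
          exact no_induced_union cycleC4 (by decide) (by decide) (by decide) ihC ihC
      constructor
      · rw [qtG_succ]
        exact no_induced_join_unit pathP4 (by decide) hUP
      · rw [qtG_succ]
        exact no_induced_join_unit cycleC4 (by decide) hUC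

end QT

section Final

lemma qtV_nonempty : ∀ k : ℕ, Nonempty (qtV k)
  | 0 => ⟨(0 : Fin 2)⟩
  | _ + 1 => ⟨Sum.inl ()⟩

end Final

theorem statement_9' (k : ℕ) :
    ∃ (n : ℕ) (G : SimpleGraph (Fin n)), IsQuasiThreshold G ∧ k < lcw G := by
  classical
  haveI : Nonempty (qtV k) := qtV_nonempty k
  set N := Fintype.card (qtV k) with hN
  set σ : Fin N ≃ qtV k := (Fintype.equivFin (qtV k)).symm with hσ
  refine ⟨N, (qtG k).comap σ, ⟨?_, ?_⟩, ?_⟩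
  · rintro ⟨f, hf⟩
    exact (qtG_quasiThreshold k).1
      ⟨⟨fun a => σ (f a), fun a b h => f.injective (σ.injective h)⟩,
        fun a b => (hf a b).trans Iff.rfl⟩
  · rintro ⟨f, hf⟩
    exact (qtG_quasiThreshold k).2
      ⟨⟨fun a => σ (f a), fun a b h => f.injective (σ.injective h)⟩,
        fun a b => (hf a b).trans Iff.rfl⟩
  · -- hardness transfers along the isomorphism
    have hHard : Hard ((qtG k).comap σ) (k + 1) := by
      intro f hf
      obtain ⟨p, S, hcard, hpre, ⟨w, hw, hwadj⟩, hdis⟩ :=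
        hard_qtG k (fun v => f (σ.symm v)) (fun a b h => σ.symm.injective (hf h))
      refine ⟨p, S.image σ.symm, ?_, ?_, ⟨σ.symm w, hw, ?_⟩, ?_⟩
      · rw [Finset.card_image_of_injective _ σ.symm.injective, hcard]
      · intro a ha
        obtain ⟨s, hs, rfl⟩ := Finset.mem_image.1 ha
        exact hpre s hs
      · intro a ha
        obtain ⟨s, hs, rfl⟩ := Finset.mem_image.1 ha
        show (qtG k).Adj (σ (σ.symm s)) (σ (σ.symm w))
        rw [Equiv.apply_symm_apply, Equiv.apply_symm_apply]
        exact hwadj s hs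
      · intro a ha b hb hab
        obtain ⟨s, hs, rfl⟩ := Finset.mem_image.1 ha
        obtain ⟨t, ht, rfl⟩ := Finset.mem_image.1 hb
        have hst : s ≠ t := fun h => hab (by rw [h])
        obtain ⟨w0, hw0, hnd⟩ := hdis s hs t ht hst
        refine ⟨σ.symm w0, hw0, fun hiff => hnd ?_⟩
        have e1 : ((qtG k).comap σ).Adj (σ.symm s) (σ.symm w0) ↔ (qtG k).Adj s w0 := by
          rw [SimpleGraph.comap_adj, Equiv.apply_symm_apply, Equiv.apply_symm_apply]
        have e2 : ((qtG k).comap σ).Adj (σ.symm t) (σ.symm w0) ↔ (qtG k).Adj t w0 := by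
          rw [SimpleGraph.comap_adj, Equiv.apply_symm_apply, Equiv.apply_symm_apply]
        exact (e1.symm.trans hiff).trans e2
    haveI : Nonempty (Fin N) := ⟨⟨0, Fintype.card_pos⟩⟩
    obtain ⟨e, he⟩ := builds_card ((qtG k).comap σ)
    have hne : {K : ℕ | ∃ e : List (LcwOp (Fin K)), Builds e ((qtG k).comap σ)}.Nonempty :=
      ⟨_, e, he⟩
    obtain ⟨e₀, he₀⟩ := Nat.sInf_mem hne
    exact hHard.le_labels e₀ he₀

/-- Corollary `thm-lcw-main-first-half`: the class of
quasi-threshold graphs has unbounded linear clique-width. -/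
theorem statement_9 (k : ℕ) :
    ∃ (n : ℕ) (G : SimpleGraph (Fin n)), IsQuasiThreshold G ∧ k < lcw G :=
  statement_9' k
end

section
/- Let G be a finite graph on vertices {1, …, n} and let H₁, …, H_n be finite graphs. Then the inflation G[H₁, …, H_n] satisfies lcw(G[H₁, …, H_n]) ≤ lcw(G) + max_{1 ≤ i ≤ n} lcw(H_i). Consequently, for classes C and D of graphs of bounded linear clique-width, lcw(C[D]) ≤ lcw(C) + lcw(D). -/
section Statement11Aux

open Sum

variable {L L' : Type}

/-- Basic well-formedness of an lcw state. -/
def SWf (s : LcwState L) : Prop :=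
  (∀ v, s.n ≤ v → s.lab v = none) ∧
  (∀ v, v < s.n → s.lab v ≠ none) ∧
  (∀ u v, s.adj u v → u < s.n ∧ v < s.n ∧ u ≠ v)

lemma swf_init : SWf (LcwState.init L) :=
  ⟨fun _ _ => rfl, fun v hv => absurd hv (Nat.not_lt_zero v), fun _ _ h => h.elim⟩

lemma swf_step [DecidableEq L] {s : LcwState L} (h : SWf s) (op : LcwOp L) :
    SWf (s.step op) := by
  obtain ⟨h1, h2, h3⟩ := h
  cases op with
  | insert a =>
      refine ⟨?_, ?_, ?_⟩
      · intro v hv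
        simp only [LcwState.step] at hv ⊢
        rw [if_neg (by omega)]
        exact h1 v (by omega)
      · intro v hv
        simp only [LcwState.step] at hv ⊢
        by_cases hv' : v = s.n
        · simp [hv']
        · rw [if_neg hv']; exact h2 v (by omega)
      · intro u v huv
        simp only [LcwState.step] at huv ⊢
        obtain ⟨a', b', c'⟩ := h3 u v huv
        exact ⟨by omega, by omega, c'⟩
  | join i j =>
      refine ⟨h1, h2, ?_⟩
      intro u v huv
      simp only [LcwState.step] at huv ⊢
      rcases huv with huv | ⟨hne, hl⟩
      · exact h3 u v huv
      · refine ⟨?_, ?_, hne⟩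
        · by_contra hc
          have hn := h1 u (by omega)
          rcases hl with ⟨hl, _⟩ | ⟨hl, _⟩ <;> rw [hn] at hl <;> cases hl
        · by_contra hc
          have hn := h1 v (by omega)
          rcases hl with ⟨_, hl⟩ | ⟨_, hl⟩ <;> rw [hn] at hl <;> cases hl
  | relabel i j =>
      refine ⟨?_, ?_, h3⟩
      · intro v hv
        simp only [LcwState.step] at hv ⊢
        rw [h1 v hv]
        simp
      · intro v hv
        simp only [LcwState.step] at hv ⊢
        split
        · simp
        · exact h2 v hv

lemma swf_foldl [DecidableEq L] (e : List (LcwOp L)) :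
    ∀ (s : LcwState L), SWf s → SWf (e.foldl LcwState.step s) := by
  induction e with
  | nil => intro s hs; exact hs
  | cons op rest ih => intro s hs; exact ih _ (swf_step hs op)

lemma swf_run [DecidableEq L] (e : List (LcwOp L)) : SWf (runLcw e) :=
  swf_foldl e _ swf_init

/-! ### Relabeling expressions along an injective map -/

def mapOp (g : L → L') : LcwOp L → LcwOp L'
  | .insert a => .insert (g a)
  | .join i j => .join (g i) (g j)
  | .relabel i j => .relabel (g i) (g j)

def mapExpr (g : L → L') (e : List (LcwOp L)) : List (LcwOp L') := e.map (mapOp g)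

def MapRel (g : L → L') (s : LcwState L) (s' : LcwState L') : Prop :=
  s'.n = s.n ∧ (∀ u v, s'.adj u v ↔ s.adj u v) ∧ ∀ v, s'.lab v = (s.lab v).map g

lemma mapRel_step [DecidableEq L] [DecidableEq L'] {g : L → L'} (hg : Function.Injective g)
    {s : LcwState L} {s' : LcwState L'} (h : MapRel g s s') (op : LcwOp L) :
    MapRel g (s.step op) (s'.step (mapOp g op)) := by
  obtain ⟨hn, ha, hl⟩ := h
  have key : ∀ w (x : L), s'.lab w = some (g x) ↔ s.lab w = some x := by
    intro w x
    rw [hl]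
    cases s.lab w with
    | none => simp
    | some y => simp [hg.eq_iff]
  cases op with
  | insert a =>
      refine ⟨by simp [LcwState.step, mapOp, hn], by simpa [LcwState.step, mapOp] using ha, ?_⟩
      intro v
      simp only [LcwState.step, mapOp, hn]
      split <;> simp [hl]
  | join i j =>
      refine ⟨hn, ?_, hl⟩
      intro u v
      simp only [LcwState.step, mapOp]
      rw [ha, key, key, key, key]
  | relabel i j =>
      refine ⟨hn, ha, ?_⟩
      intro v
      simp only [LcwState.step, mapOp]
      cases hsv : s.lab v with
      | none => rw [hl, hsv]; simp
      | some y =>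
          rw [hl, hsv]
          by_cases hyi : y = i
          · subst hyi; simp
          · simp [hyi, hg.eq_iff]

lemma mapRel_foldl [DecidableEq L] [DecidableEq L'] {g : L → L'} (hg : Function.Injective g)
    (e : List (LcwOp L)) :
    ∀ {s : LcwState L} {s' : LcwState L'}, MapRel g s s' →
      MapRel g (e.foldl LcwState.step s) ((mapExpr g e).foldl LcwState.step s') := by
  induction e with
  | nil => intro s s' h; exact h
  | cons op rest ih => intro s s' h; exact ih (mapRel_step hg h op)

lemma mapRel_run [DecidableEq L] [DecidableEq L'] {g : L → L'} (hg : Function.Injective g)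
    (e : List (LcwOp L)) : MapRel g (runLcw e) (runLcw (mapExpr g e)) :=
  mapRel_foldl hg e ⟨rfl, fun _ _ => Iff.rfl, fun _ => rfl⟩

lemma wfExpr_map {g : L → L'} (hg : Function.Injective g) {e : List (LcwOp L)}
    (he : WfExpr e) : WfExpr (mapExpr g e) := by
  intro op hop i j hij
  simp only [mapExpr, List.mem_map] at hop
  obtain ⟨op', hop', rfl⟩ := hop
  cases op' with
  | insert a => simp [mapOp] at hij
  | relabel a b => simp [mapOp] at hij
  | join a b =>
      simp only [mapOp, LcwOp.join.injEq] at hij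
      obtain ⟨rfl, rfl⟩ := hij
      exact fun hc => (he _ hop' a b rfl) (hg hc)

lemma buildsVia_map [DecidableEq L] [DecidableEq L'] {g : L → L'} (hg : Function.Injective g)
    {V : Type} [Fintype V] {e : List (LcwOp L)} {G : SimpleGraph V} {f : V → ℕ}
    (h : BuildsVia e G f) : BuildsVia (mapExpr g e) G f := by
  obtain ⟨hwf, hinj, hn, hlt, hadj⟩ := h
  obtain ⟨hn', ha', _⟩ := mapRel_run hg e
  exact ⟨wfExpr_map hg hwf, hinj, by rw [hn']; exact hn, fun v => by rw [hn']; exact hlt v,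
    fun u v => by rw [hadj u v, ha']⟩

lemma builds_map [DecidableEq L] [DecidableEq L'] {g : L → L'} (hg : Function.Injective g)
    {V : Type} [Fintype V] {e : List (LcwOp L)} {G : SimpleGraph V}
    (h : Builds e G) : Builds (mapExpr g e) G := by
  obtain ⟨f, hf⟩ := h
  exact ⟨f, buildsVia_map hg hf⟩

lemma builds_iso {V W : Type} [Fintype V] [Fintype W] {G : SimpleGraph V} {G' : SimpleGraph W}
    (φ : V ≃ W) (hφ : ∀ a b, G.Adj a b ↔ G'.Adj (φ a) (φ b))
    [DecidableEq L] {e : List (LcwOp L)} (h : Builds e G) : Builds e G' := by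
  obtain ⟨f, hwf, hinj, hn, hlt, hadj⟩ := h
  refine ⟨f ∘ φ.symm, hwf, hinj.comp φ.symm.injective, ?_, fun v => hlt _, ?_⟩
  · rw [hn]; exact Fintype.card_congr φ
  · intro u v
    have := hφ (φ.symm u) (φ.symm v)
    simp only [Equiv.apply_symm_apply] at this
    rw [← this, hadj]
    rfl

/-! ### Every finite graph has an lcw expression -/

lemma insert_fold [DecidableEq L] (l : List L) :
    ∀ (s : LcwState L),
      ((l.map LcwOp.insert).foldl LcwState.step s).n = s.n + l.length ∧
      (∀ u v, ((l.map LcwOp.insert).foldl LcwState.step s).adj u v ↔ s.adj u v) ∧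
      (∀ v, v < s.n → ((l.map LcwOp.insert).foldl LcwState.step s).lab v = s.lab v) ∧
      (∀ w (hw : w < l.length),
        ((l.map LcwOp.insert).foldl LcwState.step s).lab (s.n + w) = some (l.get ⟨w, hw⟩)) := by
  induction l with
  | nil =>
      intro s
      exact ⟨rfl, fun _ _ => Iff.rfl, fun _ _ => rfl, fun w hw => absurd hw (by simp)⟩
  | cons a l ih =>
      intro s
      set s1 := s.step (LcwOp.insert a) with hs1
      have hs1n : s1.n = s.n + 1 := rfl
      have hs1lab : ∀ v, s1.lab v = if v = s.n then some a else s.lab v := fun _ => rfl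
      obtain ⟨ihn, iha, ihl, ihg⟩ := ih s1
      have hfold : ((a :: l).map LcwOp.insert).foldl LcwState.step s =
          (l.map LcwOp.insert).foldl LcwState.step s1 := rfl
      rw [hfold]
      refine ⟨by rw [ihn, hs1n]; simp [Nat.add_assoc, Nat.add_comm 1], ?_, ?_, ?_⟩
      · intro u v; rw [iha]; rfl
      · intro v hv
        rw [ihl v (by omega), hs1lab]
        rw [if_neg (by omega)]
      · intro w hw
        match w with
        | 0 =>
            have : s.n + 0 < s1.n := by omega
            rw [ihl _ this, hs1lab]
            simp
        | Nat.succ w' =>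
            have hw' : w' < l.length := by simpa using hw
            have : s.n + (w' + 1) = s1.n + w' := by omega
            rw [this, ihg w' hw']
            rfl

lemma join_fold [DecidableEq L] (ps : List (L × L)) :
    ∀ (s : LcwState L),
      ((ps.map fun p => LcwOp.join p.1 p.2).foldl LcwState.step s).n = s.n ∧
      (∀ v, ((ps.map fun p => LcwOp.join p.1 p.2).foldl LcwState.step s).lab v = s.lab v) ∧
      ∀ u v, ((ps.map fun p => LcwOp.join p.1 p.2).foldl LcwState.step s).adj u v ↔
        s.adj u v ∨ ∃ p ∈ ps, u ≠ v ∧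
          ((s.lab u = some p.1 ∧ s.lab v = some p.2) ∨
           (s.lab u = some p.2 ∧ s.lab v = some p.1)) := by
  induction ps with
  | nil =>
      intro s
      exact ⟨rfl, fun _ => rfl, fun u v => by simp⟩
  | cons p ps ih =>
      intro s
      set s1 := s.step (LcwOp.join p.1 p.2) with hs1
      have hs1n : s1.n = s.n := rfl
      have hs1lab : ∀ v, s1.lab v = s.lab v := fun _ => rfl
      have hs1adj : ∀ u v, s1.adj u v ↔ s.adj u v ∨ (u ≠ v ∧
          ((s.lab u = some p.1 ∧ s.lab v = some p.2) ∨
           (s.lab u = some p.2 ∧ s.lab v = some p.1))) := fun _ _ => Iff.rfl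
      obtain ⟨ihn, ihl, iha⟩ := ih s1
      have hfold : (((p :: ps).map fun p => LcwOp.join p.1 p.2).foldl LcwState.step s) =
          ((ps.map fun p => LcwOp.join p.1 p.2).foldl LcwState.step s1) := rfl
      rw [hfold]
      refine ⟨by rw [ihn, hs1n], fun v => by rw [ihl, hs1lab], ?_⟩
      intro u v
      rw [iha u v, hs1adj u v]
      simp only [hs1lab, List.mem_cons]
      constructor
      · rintro ((h | h) | ⟨q, hq, h⟩)
        · exact Or.inl h
        · exact Or.inr ⟨p, Or.inl rfl, h⟩
        · exact Or.inr ⟨q, Or.inr hq, h⟩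
      · rintro (h | ⟨q, (rfl | hq), h⟩)
        · exact Or.inl (Or.inl h)
        · exact Or.inl (Or.inr h)
        · exact Or.inr ⟨q, hq, h⟩

lemma exists_builds {V : Type} [Fintype V] (G : SimpleGraph V) :
    ∃ e : List (LcwOp (Fin (Fintype.card V))), Builds e G := by
  classical
  set N := Fintype.card V with hN
  set g : V ≃ Fin N := Fintype.equivFin V with hg
  set ps : List (Fin N × Fin N) :=
    ((List.finRange N) ×ˢ (List.finRange N)).filter
      (fun p => decide (G.Adj (g.symm p.1) (g.symm p.2))) with hps
  have hmem : ∀ p : Fin N × Fin N, p ∈ ps ↔ G.Adj (g.symm p.1) (g.symm p.2) := by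
    intro p
    rw [hps, List.mem_filter]
    constructor
    · rintro ⟨-, h⟩; exact of_decide_eq_true h
    · intro h
      refine ⟨?_, decide_eq_true h⟩
      have hp : p = (p.1, p.2) := rfl
      rw [hp, List.mem_product]
      exact ⟨List.mem_finRange _, List.mem_finRange _⟩
  set e : List (LcwOp (Fin N)) :=
    ((List.finRange N).map LcwOp.insert) ++ (ps.map fun p => LcwOp.join p.1 p.2) with he
  have hrun : runLcw e =
      ((ps.map fun p => LcwOp.join p.1 p.2).foldl LcwState.step
        (((List.finRange N).map LcwOp.insert).foldl LcwState.step (LcwState.init _))) := by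
    rw [he, runLcw, List.foldl_append]
  obtain ⟨h1n, h1a, _, h1g⟩ := insert_fold (List.finRange N) (LcwState.init (Fin N))
  obtain ⟨h2n, h2l, h2a⟩ := join_fold ps
      (((List.finRange N).map LcwOp.insert).foldl LcwState.step (LcwState.init (Fin N)))
  have hinitn : (LcwState.init (Fin N)).n = 0 := rfl
  have hlen : (List.finRange N).length = N := List.length_finRange
  have hrn : (runLcw e).n = N := by rw [hrun, h2n, h1n, hinitn, hlen]; omega
  have hlab1 : ∀ w : Fin N,
      (((List.finRange N).map LcwOp.insert).foldl LcwState.step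
        (LcwState.init (Fin N))).lab (w : ℕ) = some w := by
    intro w
    have hw : (w : ℕ) < (List.finRange N).length := by rw [hlen]; exact w.isLt
    have h' := h1g (w : ℕ) hw
    rw [hinitn, List.get_finRange, Nat.zero_add] at h'
    exact h'
  refine ⟨e, fun v => ((g v : Fin N) : ℕ), ?_, ?_, ?_, ?_, ?_⟩
  · -- WfExpr
    intro op hop i j hij
    rw [he, List.mem_append] at hop
    rcases hop with hop | hop
    · simp only [List.mem_map] at hop
      obtain ⟨x, _, rfl⟩ := hop
      exact absurd hij (by simp)
    · simp only [List.mem_map] at hop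
      obtain ⟨p, hp, rfl⟩ := hop
      cases hij
      rw [hmem] at hp
      intro hc
      rw [hc] at hp
      simp at hp
  · intro u v huv
    exact g.injective (Fin.val_injective huv)
  · rw [hrn]
  · intro v; rw [hrn]; exact (g v).isLt
  · intro u v
    rw [hrun, h2a]
    constructor
    · intro huv
      refine Or.inr ⟨(g u, g v), ?_, ?_, Or.inl ⟨hlab1 (g u), hlab1 (g v)⟩⟩
      · rw [hmem]; simpa using huv
      · intro hc
        have h' : u = v := g.injective (Fin.val_injective hc)
        rw [h'] at huv
        exact G.irrefl huv
    · rintro (h | ⟨p, hp, hne, ⟨hu, hv⟩ | ⟨hu, hv⟩⟩)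
      · rw [h1a] at h; exact h.elim
      · rw [hlab1 (g u)] at hu
        rw [hlab1 (g v)] at hv
        have hu' : p.1 = g u := by injection hu with h'; exact h'.symm
        have hv' : p.2 = g v := by injection hv with h'; exact h'.symm
        rw [hmem, hu', hv'] at hp
        simpa using hp
      · rw [hlab1 (g u)] at hu
        rw [hlab1 (g v)] at hv
        have hu' : p.2 = g u := by injection hu with h'; exact h'.symm
        have hv' : p.1 = g v := by injection hv with h'; exact h'.symm
        rw [hmem, hu', hv'] at hp
        simp only [Equiv.symm_apply_apply] at hp
        exact hp.symm
  -- done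

lemma lcw_le {V : Type} [Fintype V] {G : SimpleGraph V} {k : ℕ}
    (h : ∃ e : List (LcwOp (Fin k)), Builds e G) : lcw G ≤ k :=
  Nat.sInf_le h

lemma exists_builds_lcw {V : Type} [Fintype V] (G : SimpleGraph V) :
    ∃ e : List (LcwOp (Fin (lcw G))), Builds e G :=
  Nat.sInf_mem (⟨_, exists_builds G⟩ : {k : ℕ | ∃ e : List (LcwOp (Fin k)), Builds e G}.Nonempty)

/-! ### Running a right-labeled expression on top of a left-labeled state -/

def InlOnly {α β : Type} (s : LcwState (α ⊕ β)) : Prop :=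
  ∀ v (b : β), s.lab v ≠ some (Sum.inr b)

def ShiftRel {α β : Type} (s0 : LcwState (α ⊕ β)) (t : LcwState β)
    (s : LcwState (α ⊕ β)) : Prop :=
  s.n = s0.n + t.n ∧
  (∀ v, v < s0.n → s.lab v = s0.lab v) ∧
  (∀ w, s.lab (s0.n + w) = (t.lab w).map Sum.inr) ∧
  (∀ u v, s.adj u v ↔ s0.adj u v ∨ ∃ u' v', u = s0.n + u' ∧ v = s0.n + v' ∧ t.adj u' v')

lemma shiftRel_init {α β : Type} {s0 : LcwState (α ⊕ β)} (h0 : SWf s0) :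
    ShiftRel s0 (LcwState.init β) s0 := by
  refine ⟨(Nat.add_zero _).symm, fun _ _ => rfl, ?_, ?_⟩
  · intro w
    rw [h0.1 _ (Nat.le_add_right _ _)]
    rfl
  · intro u v
    constructor
    · exact Or.inl
    · rintro (h | ⟨u', v', _, _, h⟩)
      · exact h
      · exact h.elim

lemma shiftRel_step {α β : Type} [DecidableEq α] [DecidableEq β]
    {s0 : LcwState (α ⊕ β)} {t : LcwState β} {s : LcwState (α ⊕ β)}
    (h0 : SWf s0) (hinl : InlOnly s0) (h : ShiftRel s0 t s) (op : LcwOp β) :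
    ShiftRel s0 (t.step op) (s.step (mapOp Sum.inr op)) := by
  obtain ⟨hn, hlo, hhi, ha⟩ := h
  -- decoding labels
  have key : ∀ u (x : β), s.lab u = some (Sum.inr x) ↔
      ∃ u', u = s0.n + u' ∧ t.lab u' = some x := by
    intro u x
    by_cases hu : u < s0.n
    · rw [hlo u hu]
      constructor
      · intro hc; exact absurd hc (hinl u x)
      · rintro ⟨u', rfl, -⟩; omega
    · have hu' : u = s0.n + (u - s0.n) := by omega
      rw [hu', hhi]
      constructor
      · intro hc
        refine ⟨u - s0.n, rfl, ?_⟩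
        cases hlab : t.lab (u - s0.n) with
        | none => rw [hlab] at hc; simp at hc
        | some y =>
            rw [hlab] at hc
            simp only [Option.map_some] at hc
            injection hc with hc'
            rw [Sum.inr.injEq] at hc'
            rw [hc']
      · rintro ⟨u'', hu'', hl⟩
        have : u - s0.n = u'' := by omega
        rw [this, hl]
        rfl
  cases op with
  | insert b =>
      refine ⟨by simp only [LcwState.step, mapOp, hn]; omega, ?_, ?_, ?_⟩
      · intro v hv
        simp only [LcwState.step, mapOp]
        rw [if_neg (by omega), hlo v hv]
      · intro w
        simp only [LcwState.step, mapOp, hn]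
        by_cases hw : w = t.n
        · rw [if_pos (by omega), if_pos hw]
          rfl
        · rw [if_neg (by omega), if_neg hw, hhi]
      · intro u v
        simp only [LcwState.step, mapOp]
        exact ha u v
  | join b b' =>
      refine ⟨hn, hlo, hhi, ?_⟩
      intro u v
      show (s.adj u v ∨ _) ↔ _
      constructor
      · rintro (h | ⟨hne, ⟨hu, hv⟩ | ⟨hu, hv⟩⟩)
        · rw [ha] at h
          rcases h with h | ⟨u', v', rfl, rfl, h⟩
          · exact Or.inl h
          · exact Or.inr ⟨u', v', rfl, rfl, Or.inl h⟩
        · obtain ⟨u', rfl, hu'⟩ := (key u b).mp hu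
          obtain ⟨v', rfl, hv'⟩ := (key v b').mp hv
          exact Or.inr ⟨u', v', rfl, rfl, Or.inr ⟨by omega, Or.inl ⟨hu', hv'⟩⟩⟩
        · obtain ⟨u', rfl, hu'⟩ := (key u b').mp hu
          obtain ⟨v', rfl, hv'⟩ := (key v b).mp hv
          exact Or.inr ⟨u', v', rfl, rfl, Or.inr ⟨by omega, Or.inr ⟨hu', hv'⟩⟩⟩
      · rintro (h | ⟨u', v', rfl, rfl, h | ⟨hne, ⟨hu, hv⟩ | ⟨hu, hv⟩⟩⟩)
        · exact Or.inl ((ha u v).mpr (Or.inl h))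
        · exact Or.inl ((ha _ _).mpr (Or.inr ⟨u', v', rfl, rfl, h⟩))
        · exact Or.inr ⟨by omega, Or.inl ⟨(key _ b).mpr ⟨u', rfl, hu⟩, (key _ b').mpr ⟨v', rfl, hv⟩⟩⟩
        · exact Or.inr ⟨by omega, Or.inr ⟨(key _ b').mpr ⟨u', rfl, hu⟩, (key _ b).mpr ⟨v', rfl, hv⟩⟩⟩
  | relabel b b' =>
      refine ⟨hn, ?_, ?_, ha⟩
      · intro v hv
        simp only [LcwState.step, mapOp]
        rw [if_neg, hlo v hv]
        rw [hlo v hv]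
        exact hinl v b
      · intro w
        simp only [LcwState.step, mapOp]
        rw [hhi]
        cases hlab : t.lab w with
        | none => simp
        | some y =>
            by_cases hy : y = b
            · subst hy; simp
            · rw [if_neg (by simp [hy]), if_neg (by simp [hy])]

lemma shiftRel_foldl {α β : Type} [DecidableEq α] [DecidableEq β]
    {s0 : LcwState (α ⊕ β)} (h0 : SWf s0) (hinl : InlOnly s0)
    (e : List (LcwOp β)) :
    ∀ {t : LcwState β} {s : LcwState (α ⊕ β)}, ShiftRel s0 t s →
      ShiftRel s0 (e.foldl LcwState.step t) ((mapExpr Sum.inr e).foldl LcwState.step s) := by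
  induction e with
  | nil => intro t s h; exact h
  | cons op rest ih => intro t s h; exact ih (shiftRel_step h0 hinl h op)

lemma shift_run {α β : Type} [DecidableEq α] [DecidableEq β]
    {s0 : LcwState (α ⊕ β)} (h0 : SWf s0) (hinl : InlOnly s0) (e : List (LcwOp β)) :
    ShiftRel s0 (runLcw e) ((mapExpr Sum.inr e).foldl LcwState.step s0) :=
  shiftRel_foldl h0 hinl e (shiftRel_init h0)

/-! ### Relabeling a batch of right labels to a fixed left label -/

lemma batch_fold {α β : Type} [DecidableEq α] [DecidableEq β] (a : α) (bs : List β) :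
    ∀ (s : LcwState (α ⊕ β)),
      ((bs.map fun b => LcwOp.relabel (Sum.inr b) (Sum.inl a)).foldl LcwState.step s).n = s.n ∧
      (∀ u v, ((bs.map fun b => LcwOp.relabel (Sum.inr b) (Sum.inl a)).foldl
          LcwState.step s).adj u v ↔ s.adj u v) ∧
      (∀ v (b : β), b ∈ bs → s.lab v = some (Sum.inr b) →
        ((bs.map fun b => LcwOp.relabel (Sum.inr b) (Sum.inl a)).foldl
          LcwState.step s).lab v = some (Sum.inl a)) ∧
      (∀ v, (∀ b ∈ bs, s.lab v ≠ some (Sum.inr b)) →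
        ((bs.map fun b => LcwOp.relabel (Sum.inr b) (Sum.inl a)).foldl
          LcwState.step s).lab v = s.lab v) := by
  induction bs with
  | nil => intro s; exact ⟨rfl, fun _ _ => Iff.rfl, fun _ b h _ => absurd h List.not_mem_nil, fun _ _ => rfl⟩
  | cons b bs ih =>
      intro s
      set s1 := s.step (LcwOp.relabel (Sum.inr b) (Sum.inl a)) with hs1
      have hs1n : s1.n = s.n := rfl
      have hs1adj : ∀ u v, s1.adj u v ↔ s.adj u v := fun _ _ => Iff.rfl
      have hs1lab : ∀ v, s1.lab v =
          if s.lab v = some (Sum.inr b) then some (Sum.inl a) else s.lab v := fun _ => rfl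
      obtain ⟨ihn, iha, ihl1, ihl2⟩ := ih s1
      have hfold : (((b :: bs).map fun b => LcwOp.relabel (Sum.inr b) (Sum.inl a)).foldl
          LcwState.step s) =
          ((bs.map fun b => LcwOp.relabel (Sum.inr b) (Sum.inl a)).foldl LcwState.step s1) := rfl
      rw [hfold]
      refine ⟨by rw [ihn, hs1n], fun u v => by rw [iha, hs1adj], ?_, ?_⟩
      · intro v b' hb' hlab
        by_cases hvb : s.lab v = some (Sum.inr b)
        · have h1 : s1.lab v = some (Sum.inl a) := by rw [hs1lab, if_pos hvb]
          have h2 : ∀ b'' ∈ bs, s1.lab v ≠ some (Sum.inr b'') := by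
            intro b'' _ hc
            rw [h1] at hc
            simp at hc
          rw [ihl2 v h2, h1]
        · rcases List.mem_cons.mp hb' with rfl | hb'
          · exact absurd hlab hvb
          · exact ihl1 v b' hb' (by rw [hs1lab, if_neg hvb]; exact hlab)
      · intro v hv
        have hvb : s.lab v ≠ some (Sum.inr b) := hv b (List.mem_cons_self)
        have h1 : s1.lab v = s.lab v := by rw [hs1lab, if_neg hvb]
        rw [ihl2 v (fun b' hb' => by rw [h1]; exact hv b' (List.mem_cons.mpr (Or.inr hb'))), h1]

/-! ### The blended expression for an inflation -/

variable {α : Type}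

/-- Blending: replace the `t`-th insertion of `eG` (labelled `a`) by the
expression `E t` (run with right labels) followed by relabeling all right
labels to `inl a`. -/
def blend {d : ℕ} (E : ℕ → List (LcwOp (Fin d))) :
    List (LcwOp α) → ℕ → List (LcwOp (α ⊕ Fin d))
  | [], _ => []
  | LcwOp.insert a :: rest, t =>
      (mapExpr Sum.inr (E t) ++
        (List.finRange d).map fun b => LcwOp.relabel (Sum.inr b) (Sum.inl a)) ++
        blend E rest (t + 1)
  | LcwOp.join i j :: rest, t => LcwOp.join (Sum.inl i) (Sum.inl j) :: blend E rest t
  | LcwOp.relabel i j :: rest, t => LcwOp.relabel (Sum.inl i) (Sum.inl j) :: blend E rest t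

/-- Size of the `t`-th block. -/
def ntE {d : ℕ} (E : ℕ → List (LcwOp (Fin d))) (t : ℕ) : ℕ := (runLcw (E t)).n

/-- Offset of the `t`-th block. -/
def offE {d : ℕ} (E : ℕ → List (LcwOp (Fin d))) (T : ℕ) : ℕ :=
  ∑ t ∈ Finset.range T, ntE E t

lemma offE_succ {d : ℕ} (E : ℕ → List (LcwOp (Fin d))) (T : ℕ) :
    offE E (T + 1) = offE E T + ntE E T :=
  Finset.sum_range_succ _ _

lemma offE_mono {d : ℕ} (E : ℕ → List (LcwOp (Fin d))) {T T' : ℕ} (h : T ≤ T') :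
    offE E T ≤ offE E T' :=
  Finset.sum_le_sum_of_subset (Finset.range_subset_range.mpr h)

lemma encode_lt {d : ℕ} (E : ℕ → List (LcwOp (Fin d))) {t T w : ℕ}
    (ht : t < T) (hw : w < ntE E t) : offE E t + w < offE E T := by
  have h1 : offE E t + w < offE E (t + 1) := by rw [offE_succ]; omega
  exact lt_of_lt_of_le h1 (offE_mono E ht)

lemma encode_inj {d : ℕ} (E : ℕ → List (LcwOp (Fin d))) {t t' w w' : ℕ}
    (hw : w < ntE E t) (hw' : w' < ntE E t')
    (h : offE E t + w = offE E t' + w') : t = t' ∧ w = w' := by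
  rcases Nat.lt_trichotomy t t' with hlt | rfl | hlt
  · have := encode_lt E hlt hw
    have h2 : offE E t' ≤ offE E t' + w' := Nat.le_add_right _ _
    omega
  · exact ⟨rfl, by omega⟩
  · have := encode_lt E hlt hw'
    omega

lemma decompE {d : ℕ} (E : ℕ → List (LcwOp (Fin d))) :
    ∀ (T : ℕ) (v : ℕ), v < offE E T → ∃ t, t < T ∧ ∃ w, w < ntE E t ∧ v = offE E t + w := by
  intro T
  induction T with
  | zero => intro v hv; simp [offE] at hv
  | succ T ih =>
      intro v hv
      rw [offE_succ] at hv
      by_cases h : v < offE E T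
      · obtain ⟨t, ht, w, hw, rfl⟩ := ih v h
        exact ⟨t, by omega, w, hw, rfl⟩
      · exact ⟨T, by omega, v - offE E T, by omega, by omega⟩

/-- The invariant along the execution of the blended expression. -/
def InvB {d : ℕ} [DecidableEq α] (E : ℕ → List (LcwOp (Fin d)))
    (sG : LcwState α) (s : LcwState (α ⊕ Fin d)) : Prop :=
  s.n = offE E sG.n ∧
  (∀ t, t < sG.n → ∀ w, w < ntE E t → s.lab (offE E t + w) = (sG.lab t).map Sum.inl) ∧
  (∀ t, t < sG.n → ∀ t', t' < sG.n → ∀ w, w < ntE E t → ∀ w', w' < ntE E t' →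
    (s.adj (offE E t + w) (offE E t' + w') ↔
      (t ≠ t' ∧ sG.adj t t') ∨ (t = t' ∧ (runLcw (E t)).adj w w')))

lemma invB_inlOnly {d : ℕ} [DecidableEq α] {E : ℕ → List (LcwOp (Fin d))}
    {sG : LcwState α} {s : LcwState (α ⊕ Fin d)}
    (hs : SWf s) (h : InvB E sG s) : InlOnly s := by
  intro v b hvb
  by_cases hv : v < s.n
  · rw [h.1] at hv
    obtain ⟨t, ht, w, hw, rfl⟩ := decompE E _ v hv
    rw [h.2.1 t ht w hw] at hvb
    cases sG.lab t <;> simp at hvb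
  · rw [hs.1 v (le_of_not_gt hv)] at hvb
    cases hvb

lemma blend_run {d : ℕ} [DecidableEq α] (E : ℕ → List (LcwOp (Fin d))) :
    ∀ (eG : List (LcwOp α)), WfExpr eG →
    ∀ (sG : LcwState α) (s : LcwState (α ⊕ Fin d)),
      SWf sG → SWf s → InvB E sG s →
      InvB E (eG.foldl LcwState.step sG) ((blend E eG sG.n).foldl LcwState.step s) := by
  intro eG
  induction eG with
  | nil => intro _ sG s _ _ h; exact h
  | cons op rest ih =>
      intro hwf sG s hsG hs hinv
      have hwfr : WfExpr rest := fun o ho i j hij => hwf o (List.mem_cons.mpr (Or.inr ho)) i j hij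
      obtain ⟨hIn, hIl, hIa⟩ := hinv
      cases op with
      | insert a =>
          -- the blended list
          have hblend : blend E (LcwOp.insert a :: rest) sG.n =
              (mapExpr Sum.inr (E sG.n) ++
                ((List.finRange d).map fun b => LcwOp.relabel (Sum.inr b) (Sum.inl a))) ++
                blend E rest (sG.n + 1) := rfl
          rw [hblend, List.foldl_append, List.foldl_append]
          set s1 := (mapExpr Sum.inr (E sG.n)).foldl LcwState.step s with hs1def
          set s2 := (((List.finRange d).map fun b =>
              LcwOp.relabel (Sum.inr b) (Sum.inl a)).foldl LcwState.step s1) with hs2def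
          set sG' := sG.step (LcwOp.insert a) with hsG'def
          have hsG'n : sG'.n = sG.n + 1 := rfl
          have hsG'lab : ∀ v, sG'.lab v = if v = sG.n then some a else sG.lab v := fun _ => rfl
          have hsG'adj : ∀ u v, sG'.adj u v ↔ sG.adj u v := fun _ _ => Iff.rfl
          have hinl : InlOnly s := invB_inlOnly hs ⟨hIn, hIl, hIa⟩
          have hshift : ShiftRel s (runLcw (E sG.n)) s1 := shift_run hs hinl (E sG.n)
          obtain ⟨hS1n, hS1lo, hS1hi, hS1a⟩ := hshift
          obtain ⟨hBn, hBa, hBl1, hBl2⟩ := batch_fold a (List.finRange d) s1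
          have hrE := swf_run (E sG.n)
          -- new state facts
          have hs2n : s2.n = offE E sG'.n := by
            rw [hBn, hS1n, hIn, hsG'n, offE_succ]
            rfl
          have hs1wf : SWf s1 := swf_foldl _ s hs
          have hs2wf : SWf s2 := swf_foldl _ s1 hs1wf
          have hsG'wf : SWf sG' := swf_step hsG _
          -- labels of s2
          have hlab2 : ∀ t, t < sG'.n → ∀ w, w < ntE E t →
              s2.lab (offE E t + w) = (sG'.lab t).map Sum.inl := by
            intro t ht w hw
            rw [hsG'n] at ht
            by_cases htT : t = sG.n
            · subst htT
              have hidx : offE E sG.n + w = s.n + w := by rw [hIn]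
              obtain ⟨b, hb⟩ : ∃ b, (runLcw (E sG.n)).lab w = some b := by
                cases hc : (runLcw (E sG.n)).lab w with
                | none => exact absurd hc (hrE.2.1 w hw)
                | some b => exact ⟨b, rfl⟩
              have h1' : s1.lab (offE E sG.n + w) = some (Sum.inr b) := by
                rw [hidx, hS1hi w, hb]; rfl
              rw [hBl1 _ b (List.mem_finRange b) h1']
              rw [hsG'lab, if_pos rfl]
              rfl
            · have ht' : t < sG.n := by omega
              have hidx : offE E t + w < s.n := by rw [hIn]; exact encode_lt E ht' hw
              have h1 : s1.lab (offE E t + w) = (sG.lab t).map Sum.inl := by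
                rw [hS1lo _ hidx, hIl t ht' w hw]
              rw [hBl2, h1, hsG'lab, if_neg htT]
              intro b _ hc
              rw [h1] at hc
              cases sG.lab t <;> simp at hc
          refine ih hwfr sG' s2 hsG'wf hs2wf ⟨hs2n, hlab2, ?_⟩
          -- adjacency of s2
          intro t ht t' ht' w hw w' hw'
          rw [hsG'n] at ht ht'
          rw [hBa, hS1a]
          constructor
          · rintro (hadj | ⟨u', v', hu, hv, hE⟩)
            · -- old adjacency: both blocks are old
              have hb := hs.2.2 _ _ hadj
              rw [hIn] at hb
              obtain ⟨hb1, hb2, -⟩ := hb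
              have htlt : t < sG.n := by
                rcases Nat.lt_or_ge t sG.n with h' | h'
                · exact h'
                · exfalso
                  have := offE_mono E h'
                  omega
              have ht'lt : t' < sG.n := by
                rcases Nat.lt_or_ge t' sG.n with h' | h'
                · exact h'
                · exfalso
                  have := offE_mono E h'
                  omega
              rw [hIa t htlt t' ht'lt w hw w' hw'] at hadj
              rcases hadj with ⟨hne, h'⟩ | h'
              · exact Or.inl ⟨hne, (hsG'adj _ _).mpr h'⟩
              · exact Or.inr h'
            · -- new block adjacency: both in block sG.n
              have hu'lt : u' < ntE E sG.n := ((swf_run _).2.2 _ _ hE).1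
              have hv'lt : v' < ntE E sG.n := ((swf_run _).2.2 _ _ hE).2.1
              rw [hIn] at hu hv
              have h1 : t = sG.n ∧ w = u' := by
                have : offE E t + w = offE E sG.n + u' := hu
                exact encode_inj E hw hu'lt this
              have h2 : t' = sG.n ∧ w' = v' := by
                have : offE E t' + w' = offE E sG.n + v' := hv
                exact encode_inj E hw' hv'lt this
              obtain ⟨ht1, hw1⟩ := h1
              obtain ⟨ht2, hw2⟩ := h2
              subst hw1
              subst hw2
              refine Or.inr ⟨by rw [ht1, ht2], ?_⟩
              rw [ht1]
              exact hE
          · rintro (⟨hne, hadj⟩ | ⟨rfl, hE⟩)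
            · -- cross edges come from sG
              rw [hsG'adj] at hadj
              have hb := hsG.2.2 _ _ hadj
              have htlt : t < sG.n := hb.1
              have ht'lt : t' < sG.n := hb.2.1
              exact Or.inl ((hIa t htlt t' ht'lt w hw w' hw').mpr (Or.inl ⟨hne, hadj⟩))
            · -- within one block
              have hb := (swf_run (E t)).2.2 _ _ hE
              by_cases htT : t = sG.n
              · subst htT
                refine Or.inr ⟨w, w', by rw [hIn], by rw [hIn], hE⟩
              · have htlt : t < sG.n := by omega
                exact Or.inl ((hIa t htlt t htlt w hw w' hw').mpr (Or.inr ⟨rfl, hE⟩))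
      | join i j =>
          have hij : i ≠ j := hwf _ List.mem_cons_self i j rfl
          have hblend : blend E (LcwOp.join i j :: rest) sG.n =
              LcwOp.join (Sum.inl i) (Sum.inl j) :: blend E rest sG.n := rfl
          rw [hblend]
          set s' := s.step (LcwOp.join (Sum.inl i) (Sum.inl j)) with hs'def
          set sG' := sG.step (LcwOp.join i j) with hsG'def
          have hsG'n : sG'.n = sG.n := rfl
          have hsG'lab : ∀ v, sG'.lab v = sG.lab v := fun _ => rfl
          have hfold : (LcwOp.join (Sum.inl i) (Sum.inl j) :: blend E rest sG.n).foldl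
              LcwState.step s = (blend E rest sG.n).foldl LcwState.step s' := rfl
          rw [hfold]
          have hkey : ∀ (t : ℕ) (x : α), t < sG.n → ∀ w, w < ntE E t →
              (s.lab (offE E t + w) = some (Sum.inl x) ↔ sG.lab t = some x) := by
            intro t x ht w hw
            rw [hIl t ht w hw]
            cases sG.lab t with
            | none => simp
            | some y => simp
          have hinv' : InvB E sG' s' := by
            refine ⟨by rw [hsG'n]; exact hIn, ?_, ?_⟩
            · intro t ht w hw
              rw [hsG'n] at ht
              rw [hsG'lab]
              exact hIl t ht w hw
            · intro t ht t' ht' w hw w' hw'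
              rw [hsG'n] at ht ht'
              have hnval : s'.adj (offE E t + w) (offE E t' + w') ↔
                  s.adj (offE E t + w) (offE E t' + w') ∨
                  ((offE E t + w) ≠ (offE E t' + w') ∧
                    ((s.lab (offE E t + w) = some (Sum.inl i) ∧
                      s.lab (offE E t' + w') = some (Sum.inl j)) ∨
                     (s.lab (offE E t + w) = some (Sum.inl j) ∧
                      s.lab (offE E t' + w') = some (Sum.inl i)))) := Iff.rfl
              have hGval : sG'.adj t t' ↔ sG.adj t t' ∨ (t ≠ t' ∧
                  ((sG.lab t = some i ∧ sG.lab t' = some j) ∨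
                   (sG.lab t = some j ∧ sG.lab t' = some i))) := Iff.rfl
              rw [hnval, hGval, hIa t ht t' ht' w hw w' hw',
                hkey t i ht w hw, hkey t j ht w hw, hkey t' i ht' w' hw', hkey t' j ht' w' hw']
              have hne_iff : (offE E t + w) ≠ (offE E t' + w') ↔ ¬(t = t' ∧ w = w') := by
                constructor
                · intro h hc
                  exact h (by rw [hc.1, hc.2])
                · intro h hc
                  exact h (encode_inj E hw hw' hc)
              rw [hne_iff]
              constructor
              · rintro ((⟨hne, h'⟩ | ⟨rfl, h'⟩) | ⟨hne, hlabs⟩)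
                · exact Or.inl ⟨hne, Or.inl h'⟩
                · exact Or.inr ⟨rfl, h'⟩
                · have htt' : t ≠ t' := by
                    intro hc
                    subst hc
                    rcases hlabs with ⟨h1, h2⟩ | ⟨h1, h2⟩ <;> rw [h1] at h2 <;>
                      injection h2 with h2' <;>
                        first
                        | exact hij h2'
                        | exact hij h2'.symm
                  exact Or.inl ⟨htt', Or.inr ⟨htt', hlabs⟩⟩
              · rintro (⟨hne, h' | ⟨-, hlabs⟩⟩ | ⟨rfl, h'⟩)
                · exact Or.inl (Or.inl ⟨hne, h'⟩)
                · exact Or.inr ⟨fun hc => hne hc.1, hlabs⟩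
                · exact Or.inl (Or.inr ⟨rfl, h'⟩)
          have hres := ih hwfr sG' s' (swf_step hsG _) (swf_step hs _) hinv'
          rw [hsG'n] at hres
          exact hres
      | relabel i j =>
          have hblend : blend E (LcwOp.relabel i j :: rest) sG.n =
              LcwOp.relabel (Sum.inl i) (Sum.inl j) :: blend E rest sG.n := rfl
          rw [hblend]
          set s' := s.step (LcwOp.relabel (Sum.inl i) (Sum.inl j)) with hs'def
          set sG' := sG.step (LcwOp.relabel i j) with hsG'def
          have hsG'n : sG'.n = sG.n := rfl
          have hfold : (LcwOp.relabel (Sum.inl i) (Sum.inl j) :: blend E rest sG.n).foldl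
              LcwState.step s = (blend E rest sG.n).foldl LcwState.step s' := rfl
          rw [hfold]
          have hinv' : InvB E sG' s' := by
            refine ⟨hIn, ?_, ?_⟩
            · intro t ht w hw
              rw [hsG'n] at ht
              have hl := hIl t ht w hw
              show (if s.lab (offE E t + w) = some (Sum.inl i) then some (Sum.inl j)
                else s.lab (offE E t + w)) =
                ((if sG.lab t = some i then some j else sG.lab t).map Sum.inl)
              rw [hl]
              cases hc : sG.lab t with
              | none => simp
              | some y =>
                  by_cases hy : y = i
                  · subst hy; simp
                  · rw [if_neg (by simp [hy]), if_neg (by simp [hy])]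
            · intro t ht t' ht' w hw w' hw'
              rw [hsG'n] at ht ht'
              exact hIa t ht t' ht' w hw w' hw'
          have hres := ih hwfr sG' s' (swf_step hsG _) (swf_step hs _) hinv'
          rw [hsG'n] at hres
          exact hres

lemma blend_wfExpr {d : ℕ} (E : ℕ → List (LcwOp (Fin d))) (hE : ∀ t, WfExpr (E t)) :
    ∀ (eG : List (LcwOp α)), WfExpr eG → ∀ t, WfExpr (blend E eG t) := by
  intro eG
  induction eG with
  | nil => intro _ t op hop; exact absurd hop List.not_mem_nil
  | cons op rest ih =>
      intro hwf t op' hop' i j hij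
      have hwfr : WfExpr rest := fun o ho a b hab => hwf o (List.mem_cons.mpr (Or.inr ho)) a b hab
      cases op with
      | insert a =>
          rcases List.mem_append.mp hop' with hop' | hop'
          · rcases List.mem_append.mp hop' with hop' | hop'
            · exact wfExpr_map Sum.inr_injective (hE t) op' hop' i j hij
            · simp only [List.mem_map] at hop'
              obtain ⟨b, _, rfl⟩ := hop'
              exact absurd hij (by simp)
          · exact ih hwfr (t + 1) op' hop' i j hij
      | join a b =>
          rcases List.mem_cons.mp hop' with rfl | hop'
          · injection hij with h1 h2
            subst h1; subst h2
            have hab : a ≠ b := hwf _ List.mem_cons_self a b rfl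
            intro hc
            exact hab (Sum.inl_injective hc)
          · exact ih hwfr t op' hop' i j hij
      | relabel a b =>
          rcases List.mem_cons.mp hop' with rfl | hop'
          · exact absurd hij (by simp)
          · exact ih hwfr t op' hop' i j hij

/-! ### Assembly: building an inflation -/

lemma inflate_builds {n : ℕ} (G : SimpleGraph (Fin n)) (m : Fin n → ℕ)
    (H : ∀ i : Fin n, SimpleGraph (Fin (m i))) {k d : ℕ}
    {eG : List (LcwOp (Fin k))} (hG : Builds eG G)
    {eH : ∀ i : Fin n, List (LcwOp (Fin d))} (hH : ∀ i, Builds (eH i) (H i)) :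
    ∃ e : List (LcwOp (Fin k ⊕ Fin d)), Builds e (inflate G m H) := by
  classical
  obtain ⟨fG, hGwf, hGinj, hGn, hGlt, hGadj⟩ := hG
  choose fH hfH using hH
  have hHwf : ∀ i, WfExpr (eH i) := fun i => (hfH i).1
  have hHinj : ∀ i, Function.Injective (fH i) := fun i => (hfH i).2.1
  have hHn : ∀ i, (runLcw (eH i)).n = m i := fun i => by
    rw [(hfH i).2.2.1, Fintype.card_fin]
  have hHlt : ∀ i v, fH i v < (runLcw (eH i)).n := fun i => (hfH i).2.2.2.1
  have hHadj : ∀ i u v, (H i).Adj u v ↔ (runLcw (eH i)).adj (fH i u) (fH i v) :=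
    fun i => (hfH i).2.2.2.2
  have hGn' : (runLcw eG).n = n := by rw [hGn, Fintype.card_fin]
  have hGlt' : ∀ i, fG i < n := fun i => by rw [← hGn']; exact hGlt i
  have hbij : Function.Bijective (fun i : Fin n => (⟨fG i, hGlt' i⟩ : Fin n)) :=
    Finite.injective_iff_bijective.mp (fun a b hab => hGinj (by injection hab))
  set σ : Fin n ≃ Fin n := Equiv.ofBijective _ hbij with hσ
  set E : ℕ → List (LcwOp (Fin d)) := fun t =>
    if h : t < n then eH (σ.symm ⟨t, h⟩) else [] with hE
  have hEfG : ∀ i, E (fG i) = eH i := by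
    intro i
    rw [hE]
    simp only [dif_pos (hGlt' i)]
    congr 1
    have h1 : (⟨fG i, hGlt' i⟩ : Fin n) = σ i := rfl
    rw [h1, Equiv.symm_apply_apply]
  have hnt : ∀ i, ntE E (fG i) = m i := by
    intro i
    rw [ntE, hEfG i, hHn i]
  have hwfE : ∀ t, WfExpr (E t) := by
    intro t
    rw [hE]
    dsimp only
    split
    · exact hHwf _
    · intro op hop; exact absurd hop List.not_mem_nil
  have hoff : offE E n = Fintype.card (Σ i : Fin n, Fin (m i)) := by
    rw [Fintype.card_sigma]
    simp only [Fintype.card_fin]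
    rw [offE, ← Fin.sum_univ_eq_sum_range]
    have hterm : ∀ t : Fin n, ntE E (t : ℕ) = m (σ.symm t) := by
      intro t
      have hfg : fG (σ.symm t) = (t : ℕ) := congrArg Fin.val (σ.apply_symm_apply t)
      rw [← hfg, hnt]
    rw [Finset.sum_congr rfl (fun t _ => hterm t)]
    exact Equiv.sum_comp σ.symm m
  have hinv0 : InvB E (LcwState.init (Fin k)) (LcwState.init (Fin k ⊕ Fin d)) := by
    refine ⟨by simp [offE, LcwState.init], ?_, ?_⟩ <;>
      { intro t ht; exact absurd ht (Nat.not_lt_zero t) }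
  have hrun := blend_run E eG hGwf (LcwState.init _) (LcwState.init _) swf_init swf_init hinv0
  obtain ⟨hIn0, hIl0, hIa0⟩ := hrun
  have hIn : (runLcw (blend E eG 0)).n = offE E ((runLcw eG).n) := hIn0
  have hIa : ∀ t, t < (runLcw eG).n → ∀ t', t' < (runLcw eG).n →
      ∀ w, w < ntE E t → ∀ w', w' < ntE E t' →
      ((runLcw (blend E eG 0)).adj (offE E t + w) (offE E t' + w') ↔
        (t ≠ t' ∧ (runLcw eG).adj t t') ∨ (t = t' ∧ (runLcw (E t)).adj w w')) := hIa0
  have hbound : ∀ x : Σ i : Fin n, Fin (m i), (fH x.1 x.2 : ℕ) < ntE E (fG x.1) := by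
    intro x
    have h1 := hHlt x.1 x.2
    rw [ntE, hEfG]
    exact h1
  refine ⟨blend E eG 0, fun x => offE E (fG x.1) + fH x.1 x.2,
    blend_wfExpr E hwfE eG hGwf 0, ?_, ?_, ?_, ?_⟩
  · rintro ⟨i, a⟩ ⟨j, b⟩ hxy
    obtain ⟨h1, h2⟩ := encode_inj E (hbound ⟨i, a⟩) (hbound ⟨j, b⟩) hxy
    have hij : i = j := hGinj h1
    subst hij
    have hab : a = b := hHinj i h2
    rw [hab]
  · rw [hIn, hGn']
    exact hoff
  · intro x
    rw [hIn, hGn']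
    exact encode_lt E (hGlt' x.1) (hbound x)
  · rintro ⟨i, a⟩ ⟨j, b⟩
    rw [hIa (fG i) (hGlt i) (fG j) (hGlt j) (fH i a) (hbound ⟨i, a⟩) (fH j b) (hbound ⟨j, b⟩)]
    constructor
    · rintro (⟨hne, hadj⟩ | ⟨heq, hadj⟩)
      · exact Or.inl ⟨fun hc => hne (hGinj hc), (hGadj i j).mp hadj⟩
      · have heq' : i = j := heq
        subst heq'
        rw [Subsingleton.elim heq rfl] at hadj
        refine Or.inr ⟨rfl, ?_⟩
        rw [hEfG i]
        exact (hHadj i a b).mp hadj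
    · rintro (⟨hne, hadj⟩ | ⟨heq, hadj⟩)
      · exact Or.inl ⟨fun hc => hne (congrArg fG hc), (hGadj i j).mpr hadj⟩
      · have hij : i = j := hGinj heq
        subst hij
        rw [hEfG i] at hadj
        exact Or.inr ⟨rfl, (hHadj i a b).mpr hadj⟩

end Statement11Aux

/-- Proposition `prop-inflate-lcw`: the inflation
`G[H₁,…,Hₙ]` satisfies `lcw (G[H₁,…,Hₙ]) ≤ lcw G + max_i lcw (H i)`; and
consequently, for classes `C`, `D` of bounded linear clique-width,
`lcw (C[D]) ≤ lcw C + lcw D`. -/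
theorem statement_11 :
    (∀ (n : ℕ) (G : SimpleGraph (Fin n)) (m : Fin n → ℕ)
        (H : ∀ i : Fin n, SimpleGraph (Fin (m i))),
      lcw (inflate G m H) ≤ lcw G + Finset.univ.sup (fun i => lcw (H i))) ∧
    (∀ (C D : Set FinGraph) (c d : ℕ),
      (∀ G ∈ C, lcw (Sigma.snd G) ≤ c) → (∀ H ∈ D, lcw (Sigma.snd H) ≤ d) →
      ∀ K ∈ classInflate C D, lcw (Sigma.snd K) ≤ c + d) := by
  have main : ∀ (n : ℕ) (G : SimpleGraph (Fin n)) (m : Fin n → ℕ)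
      (H : ∀ i : Fin n, SimpleGraph (Fin (m i))),
      lcw (inflate G m H) ≤ lcw G + Finset.univ.sup (fun i => lcw (H i)) := by
    intro n G m H
    classical
    set dmax := Finset.univ.sup (fun i => lcw (H i)) with hdmax
    obtain ⟨eG, hG⟩ := exists_builds_lcw G
    have hHe : ∀ i, ∃ e : List (LcwOp (Fin dmax)), Builds e (H i) := by
      intro i
      obtain ⟨e, he⟩ := exists_builds_lcw (H i)
      have hle : lcw (H i) ≤ dmax :=
        Finset.le_sup (f := fun i => lcw (H i)) (Finset.mem_univ i)
      exact ⟨mapExpr (Fin.castLE hle) e, builds_map (Fin.castLE_injective hle) he⟩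
    choose eH hH using hHe
    obtain ⟨e, he⟩ := inflate_builds G m H hG hH
    apply lcw_le
    exact ⟨mapExpr (finSumFinEquiv : Fin (lcw G) ⊕ Fin dmax ≃ Fin (lcw G + dmax)) e,
      builds_map finSumFinEquiv.injective he⟩
  refine ⟨main, ?_⟩
  intro C D c d hC hD K hK
  obtain ⟨n, G, m, H, hGC, hHD, φ, hφ⟩ := hK
  have h1 : lcw (Sigma.snd K) ≤ lcw (inflate G m H) := by
    apply lcw_le
    obtain ⟨eI, heI⟩ := exists_builds_lcw (inflate G m H)
    refine ⟨eI, builds_iso φ.symm ?_ heI⟩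
    intro a b
    have := hφ (φ.symm a) (φ.symm b)
    simp only [Equiv.apply_symm_apply] at this
    exact this.symm
  have h2 : lcw G ≤ c := hC ⟨n, G⟩ hGC
  have h3 : Finset.univ.sup (fun i => lcw (H i)) ≤ d :=
    Finset.sup_le fun i _ => hD ⟨m i, H i⟩ (hHD i)
  calc lcw (Sigma.snd K) ≤ lcw (inflate G m H) := h1
    _ ≤ lcw G + Finset.univ.sup (fun i => lcw (H i)) := main n G m H
    _ ≤ c + d := Nat.add_le_add h2 h3
end

section
/- Every class of finite graphs that is well-quasi-ordered under the induced subgraph order is a finite union of atomic classes. -/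
/-- every class of finite graphs that is wqo under the
induced subgraph order is a finite union of atomic classes. -/
theorem statement_14 (C : Set FinGraph) (hher : Hereditary C)
    (hwqo : ∀ f : ℕ → FinGraph, (∀ i, f i ∈ C) → ∃ i j : ℕ, i < j ∧ IndF (f i) (f j)) :
    ∃ (k : ℕ) (D : Fin k → Set FinGraph),
      (∀ i, Hereditary (D i) ∧ AtomicClass (D i)) ∧ C = ⋃ i, D i := by
  classical
  let S := {D : Set FinGraph // Hereditary D ∧ D ⊆ C}
  let r : S → S → Prop := fun A B => A.1 ⊂ B.1
  haveI : IsStrictOrder S r :=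
    { irrefl := fun a => ssubset_irrefl _
      trans := fun a b c h1 h2 => h1.trans h2 }
  have hwf : WellFounded r := by
    rw [RelEmbedding.wellFounded_iff_isEmpty]
    constructor
    intro g
    have hdesc : ∀ n : ℕ, (g (n + 1)).1 ⊂ (g n).1 := fun n =>
      g.map_rel_iff.2 (Nat.lt_succ_self n)
    have hx : ∀ n : ℕ, ∃ x, x ∈ (g n).1 ∧ x ∉ (g (n + 1)).1 := by
      intro n
      obtain ⟨x, hx1, hx2⟩ := Set.exists_of_ssubset (hdesc n)
      exact ⟨x, hx1, hx2⟩
    choose x hx1 hx2 using hx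
    have hmono : ∀ i j : ℕ, i ≤ j → (g j).1 ⊆ (g i).1 := by
      intro i j hij
      induction j with
      | zero => cases Nat.le_zero.mp hij; exact subset_rfl
      | succ j ih =>
        rcases Nat.lt_or_ge i (j + 1) with h | h
        · exact (hdesc j).subset.trans (ih (Nat.lt_succ_iff.mp h))
        · cases le_antisymm hij h; exact subset_rfl
    obtain ⟨i, j, hij, hind⟩ := hwqo x (fun n => (g n).2.2 (hx1 n))
    have hxj : x j ∈ (g (i + 1)).1 := hmono (i + 1) j hij (hx1 j)
    exact hx2 i ((g (i + 1)).2.1 (x j) hxj (x i) hind)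
  have main : ∀ A : S, ∃ (k : ℕ) (D : Fin k → Set FinGraph),
      (∀ i, Hereditary (D i) ∧ AtomicClass (D i)) ∧ A.1 = ⋃ i, D i := by
    intro A
    induction A using hwf.induction with
    | _ A ih =>
      by_cases hA : AtomicClass A.1
      · exact ⟨1, fun _ => A.1, fun _ => ⟨A.2.1, hA⟩, (Set.iUnion_const A.1).symm⟩
      · simp only [AtomicClass, not_not] at hA
        obtain ⟨D₁, D₂, h1, h2, hs1, hs2, heq⟩ := hA
        obtain ⟨k1, E1, hE1, hEq1⟩ := ih ⟨D₁, h1, hs1.subset.trans A.2.2⟩ hs1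
        obtain ⟨k2, E2, hE2, hEq2⟩ := ih ⟨D₂, h2, hs2.subset.trans A.2.2⟩ hs2
        have hEq1' : D₁ = ⋃ i, E1 i := hEq1
        have hEq2' : D₂ = ⋃ i, E2 i := hEq2
        refine ⟨k1 + k2, Fin.append E1 E2, ?_, ?_⟩
        · intro i
          refine Fin.addCases (fun i => ?_) (fun i => ?_) i
          · rw [Fin.append_left]; exact hE1 i
          · rw [Fin.append_right]; exact hE2 i
        · rw [heq, hEq1', hEq2']
          ext x
          simp only [Set.mem_union, Set.mem_iUnion]
          constructor
          · rintro (⟨i, hi⟩ | ⟨i, hi⟩)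
            · exact ⟨Fin.castAdd k2 i, by rwa [Fin.append_left]⟩
            · exact ⟨Fin.natAdd k1 i, by rwa [Fin.append_right]⟩
          · rintro ⟨i, hi⟩
            refine Fin.addCases (fun i hi => ?_) (fun i hi => ?_) i hi
            · rw [Fin.append_left] at hi; exact Or.inl ⟨i, hi⟩
            · rw [Fin.append_right] at hi; exact Or.inr ⟨i, hi⟩
  exact main ⟨C, hher, subset_rfl⟩
end
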